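/- arXiv:2506.10438 — 4 statements merged into one kernel-verified Lean document; each statement's English description precedes it below -/
import Mathlib

section
/- Let K be a compact subset of (0, ∞). Then for every ε > 0, lim_{n → ∞} sup_{α ∈ K} sup_{x ∈ [0,1]} P(|S_{α,x}^{(n)}/n − x| ≥ ε) = 0, where S_{α,x}^{(n)} is a random variable with law μ_{α,x}^{(n)}. -/
open MeasureTheory Filter Real

/-- Generalized binomial coefficient `Γ(w+1)/(Γ(z+1)Γ(w−z+1))`; since `Real.Gamma`
vanishes at its poles, this is `0` (by division by zero) when a pole appears in
the denominator. -/
noncomputable def gbinom (w z : ℝ) : ℝ :=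
  Real.Gamma (w + 1) / (Real.Gamma (z + 1) * Real.Gamma (w - z + 1))

lemma logGamma_add_le {b a : ℝ} (hb : 0 < b) (ha : 0 < a) :
    Real.log (Gamma (b + a)) ≤ Real.log (Gamma b) + a * Real.log (b + a) := by
  have h1 : 0 < Gamma b := Real.Gamma_pos_of_pos hb
  have hba : (0:ℝ) < b + a := by linarith
  have h2 : 0 < Gamma (b + a) := Real.Gamma_pos_of_pos hba
  have key := Real.convexOn_log_Gamma.slope_mono_adjacent (x := b) (y := b + a) (z := b + a + 1)
    (Set.mem_Ioi.2 hb) (Set.mem_Ioi.2 (by linarith)) (by linarith) (by linarith)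
  simp only [Function.comp] at key
  have hg : Real.Gamma (b + a + 1) = (b + a) * Real.Gamma (b + a) := Real.Gamma_add_one hba.ne'
  rw [hg, Real.log_mul hba.ne' h2.ne'] at key
  have key2 : (Real.log (Gamma (b + a)) - Real.log (Gamma b)) / a ≤ Real.log (b + a) := by
    calc (Real.log (Gamma (b + a)) - Real.log (Gamma b)) / a
        = (Real.log (Gamma (b + a)) - Real.log (Gamma b)) / (b + a - b) := by ring_nf
      _ ≤ (Real.log (b + a) + Real.log (Gamma (b + a)) - Real.log (Gamma (b + a))) / (b + a + 1 - (b + a)) := key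
      _ = Real.log (b + a) := by ring
  have := (div_le_iff₀ ha).mp key2
  linarith

lemma le_logGamma_add {a c : ℝ} (h1a : 1 < a) (hc : 0 < c) :
    Real.log (Gamma a) + c * Real.log (a - 1) ≤ Real.log (Gamma (a + c)) := by
  have ha0 : (0:ℝ) < a := by linarith
  have ha1 : (0:ℝ) < a - 1 := by linarith
  have h1 : 0 < Gamma a := Real.Gamma_pos_of_pos ha0
  have h3 : 0 < Gamma (a - 1) := Real.Gamma_pos_of_pos ha1
  have key := Real.convexOn_log_Gamma.slope_mono_adjacent (x := a - 1) (y := a) (z := a + c)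
    (Set.mem_Ioi.2 ha1) (Set.mem_Ioi.2 (by linarith)) (by linarith) (by linarith)
  simp only [Function.comp] at key
  have hg : Real.Gamma a = (a - 1) * Real.Gamma (a - 1) := by
    have := Real.Gamma_add_one ha1.ne'
    rw [show a - 1 + 1 = a by ring] at this
    rw [this]
  have key2 : Real.log (a - 1) ≤ (Real.log (Gamma (a + c)) - Real.log (Gamma a)) / c := by
    calc Real.log (a - 1)
        = (Real.log (a-1) + Real.log (Gamma (a-1)) - Real.log (Gamma (a - 1))) / (a - (a - 1)) := by ring
      _ = (Real.log (Gamma a) - Real.log (Gamma (a - 1))) / (a - (a - 1)) := by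
          rw [hg, Real.log_mul ha1.ne' h3.ne']
      _ ≤ (Real.log (Gamma (a + c)) - Real.log (Gamma a)) / (a + c - a) := key
      _ = (Real.log (Gamma (a + c)) - Real.log (Gamma a)) / c := by ring_nf
  have := (le_div_iff₀ hc).mp key2
  linarith

noncomputable def fbt (α x : ℝ) (n j : ℕ) : ℝ :=
  gbinom (α * n) (α * j) * x ^ (α * (j : ℝ)) * (1 - x) ^ (α * ((n : ℝ) - (j : ℝ)))

lemma fbt_nonneg {α x : ℝ} (hα : 0 < α) (hx0 : 0 ≤ x) (hx1 : x ≤ 1) {n j : ℕ} (hj : j ≤ n) :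
    0 ≤ fbt α x n j := by
  have hjn : (j : ℝ) ≤ n := Nat.cast_le.2 hj
  have h1 : 0 < Real.Gamma (α * n + 1) := Real.Gamma_pos_of_pos (by positivity)
  have h2 : 0 < Real.Gamma (α * j + 1) := Real.Gamma_pos_of_pos (by positivity)
  have h3 : 0 < Real.Gamma (α * n - α * j + 1) := Real.Gamma_pos_of_pos (by nlinarith)
  unfold fbt gbinom
  have : (0:ℝ) ≤ 1 - x := by linarith
  positivity

lemma fbt_pos {α x : ℝ} (hα : 0 < α) (hx0 : 0 < x) (hx1 : x < 1) {n j : ℕ} (hj : j ≤ n) :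
    0 < fbt α x n j := by
  have hjn : (j : ℝ) ≤ n := Nat.cast_le.2 hj
  have h1 : 0 < Real.Gamma (α * n + 1) := Real.Gamma_pos_of_pos (by positivity)
  have h2 : 0 < Real.Gamma (α * j + 1) := Real.Gamma_pos_of_pos (by positivity)
  have h3 : 0 < Real.Gamma (α * n - α * j + 1) := Real.Gamma_pos_of_pos (by nlinarith)
  unfold fbt gbinom
  have : (0:ℝ) < 1 - x := by linarith
  positivity

lemma log_fbt {α x : ℝ} (hα : 0 < α) (hx0 : 0 < x) (hx1 : x < 1) {n j : ℕ} (hj : j ≤ n) :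
    Real.log (fbt α x n j) =
      Real.log (Real.Gamma (α * n + 1)) - Real.log (Real.Gamma (α * j + 1))
        - Real.log (Real.Gamma (α * ((n : ℝ) - j) + 1))
        + α * j * Real.log x + α * ((n : ℝ) - j) * Real.log (1 - x) := by
  have hjn : (j : ℝ) ≤ n := Nat.cast_le.2 hj
  have h1 : 0 < Real.Gamma (α * n + 1) := Real.Gamma_pos_of_pos (by positivity)
  have h2 : 0 < Real.Gamma (α * j + 1) := Real.Gamma_pos_of_pos (by positivity)
  have h3 : 0 < Real.Gamma (α * ((n : ℝ) - j) + 1) := Real.Gamma_pos_of_pos (by nlinarith)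
  have h1x : (0:ℝ) < 1 - x := by linarith
  have hX : (0:ℝ) < x ^ (α * (j:ℝ)) := Real.rpow_pos_of_pos hx0 _
  have hY : (0:ℝ) < (1 - x) ^ (α * ((n:ℝ) - j)) := Real.rpow_pos_of_pos h1x _
  unfold fbt gbinom
  rw [show α * (n:ℝ) - α * j + 1 = α * ((n : ℝ) - j) + 1 by ring]
  rw [Real.log_mul (by positivity) hY.ne', Real.log_mul (by positivity) hX.ne',
    Real.log_div h1.ne' (by positivity), Real.log_mul h2.ne' h3.ne',
    Real.log_rpow hx0, Real.log_rpow h1x]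
  ring

lemma ratio_up {α x : ℝ} (hα : 0 < α) (hx0 : 0 < x) (hx1 : x < 1) {n k : ℕ}
    (hk1 : 1 ≤ k) (hkn : k + 1 ≤ n) :
    fbt α x n (k+1) ≤ ((x * (α * ((n:ℝ) - k) + 1)) / ((1 - x) * (α * k))) ^ α * fbt α x n k := by
  have hkn' : (k:ℝ) + 1 ≤ n := by exact_mod_cast hkn
  have hk1' : (1:ℝ) ≤ k := by exact_mod_cast hk1
  have h1x : (0:ℝ) < 1 - x := by linarith
  have hk0 : (0:ℝ) < α * k := by nlinarith
  have hA : (0:ℝ) < α * ((n:ℝ) - k) + 1 := by nlinarith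
  have hB : (0:ℝ) < (x * (α * ((n:ℝ) - k) + 1)) / ((1 - x) * (α * k)) := by positivity
  have hL : 0 < fbt α x n (k+1) := fbt_pos hα hx0 hx1 hkn
  have hRf : 0 < fbt α x n k := fbt_pos hα hx0 hx1 (by omega)
  have hR : 0 < ((x * (α * ((n:ℝ) - k) + 1)) / ((1 - x) * (α * k))) ^ α * fbt α x n k :=
    mul_pos (Real.rpow_pos_of_pos hB α) hRf
  rw [← Real.log_le_log_iff hL hR]
  rw [Real.log_mul (Real.rpow_pos_of_pos hB α).ne' hRf.ne', Real.log_rpow hB,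
    log_fbt hα hx0 hx1 hkn, log_fbt hα hx0 hx1 (by omega : k ≤ n)]
  push_cast
  have i1 := le_logGamma_add (a := α * (k:ℝ) + 1) (c := α) (by nlinarith) hα
  rw [show α * (k:ℝ) + 1 - 1 = α * (k:ℝ) by ring,
    show α * (k:ℝ) + 1 + α = α * ((k:ℝ) + 1) + 1 by ring] at i1
  have i2 := logGamma_add_le (b := α * ((n:ℝ) - k - 1) + 1) (a := α) (by nlinarith) hα
  rw [show α * ((n:ℝ) - k - 1) + 1 + α = α * ((n:ℝ) - k) + 1 by ring] at i2
  have hlogB : Real.log ((x * (α * ((n:ℝ) - k) + 1)) / ((1 - x) * (α * k)))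
      = Real.log x + Real.log (α * ((n:ℝ) - k) + 1) - (Real.log (1 - x) + Real.log (α * k)) := by
    rw [Real.log_div (by positivity) (by positivity), Real.log_mul hx0.ne' hA.ne',
      Real.log_mul h1x.ne' hk0.ne']
  rw [hlogB, show (n:ℝ) - ((k:ℝ) + 1) = (n:ℝ) - k - 1 by ring]
  nlinarith [i1, i2]

lemma ratio_down {α x : ℝ} (hα : 0 < α) (hx0 : 0 < x) (hx1 : x < 1) {n k : ℕ}
    (hkn : k + 2 ≤ n) :
    fbt α x n k ≤ (((1 - x) * (α * ((k:ℝ) + 1) + 1)) / (x * (α * ((n:ℝ) - k - 1)))) ^ α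
      * fbt α x n (k+1) := by
  have hkn' : (k:ℝ) + 2 ≤ n := by exact_mod_cast hkn
  have h1x : (0:ℝ) < 1 - x := by linarith
  have hD : (0:ℝ) < α * ((n:ℝ) - k - 1) := by nlinarith
  have hC : (0:ℝ) < α * ((k:ℝ) + 1) + 1 := by positivity
  have hB : (0:ℝ) < ((1 - x) * (α * ((k:ℝ) + 1) + 1)) / (x * (α * ((n:ℝ) - k - 1))) := by positivity
  have hL : 0 < fbt α x n k := fbt_pos hα hx0 hx1 (by omega)
  have hRf : 0 < fbt α x n (k+1) := fbt_pos hα hx0 hx1 (by omega)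
  have hR : 0 < (((1 - x) * (α * ((k:ℝ) + 1) + 1)) / (x * (α * ((n:ℝ) - k - 1)))) ^ α
      * fbt α x n (k+1) := mul_pos (Real.rpow_pos_of_pos hB α) hRf
  rw [← Real.log_le_log_iff hL hR]
  rw [Real.log_mul (Real.rpow_pos_of_pos hB α).ne' hRf.ne', Real.log_rpow hB,
    log_fbt hα hx0 hx1 (by omega : k ≤ n), log_fbt hα hx0 hx1 (by omega : k + 1 ≤ n)]
  push_cast
  have i1 := logGamma_add_le (b := α * (k:ℝ) + 1) (a := α) (by positivity) hα
  rw [show α * (k:ℝ) + 1 + α = α * ((k:ℝ) + 1) + 1 by ring] at i1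
  have i2 := le_logGamma_add (a := α * ((n:ℝ) - k - 1) + 1) (c := α) (by nlinarith) hα
  rw [show α * ((n:ℝ) - k - 1) + 1 - 1 = α * ((n:ℝ) - k - 1) by ring,
    show α * ((n:ℝ) - k - 1) + 1 + α = α * ((n:ℝ) - k) + 1 by ring] at i2
  have hlogB : Real.log (((1 - x) * (α * ((k:ℝ) + 1) + 1)) / (x * (α * ((n:ℝ) - k - 1))))
      = Real.log (1 - x) + Real.log (α * ((k:ℝ) + 1) + 1)
        - (Real.log x + Real.log (α * ((n:ℝ) - k - 1))) := by
    rw [Real.log_div (by positivity) (by positivity), Real.log_mul h1x.ne' hC.ne',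
      Real.log_mul hx0.ne' hD.ne']
  rw [hlogB, show (n:ℝ) - ((k:ℝ) + 1) = (n:ℝ) - k - 1 by ring]
  nlinarith [i1, i2]

lemma step_up {α₀ α x e : ℝ} {n k : ℕ} (hα₀ : 0 < α₀) (hα : α₀ ≤ α)
    (he : 0 < e) (he1 : e ≤ 1) (hx0 : 0 < x) (hx1 : x < 1)
    (hk1 : 1 ≤ k) (hkn : k + 1 ≤ n) (hklb : (n:ℝ) * (x + e/2) ≤ k)
    (hbig : 4 ≤ α₀ * n * e) :
    fbt α x n (k+1) ≤ (1 - e/8) ^ α₀ * fbt α x n k := by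
  have hαpos : 0 < α := lt_of_lt_of_le hα₀ hα
  have hkn' : (k:ℝ) + 1 ≤ n := by exact_mod_cast hkn
  have hk1' : (1:ℝ) ≤ k := by exact_mod_cast hk1
  have h1x : (0:ℝ) < 1 - x := by linarith
  have hn0 : (0:ℝ) < n := by linarith
  have hP : (0:ℝ) < α * n := by positivity
  have hPe : 4 ≤ (α * n) * e := by nlinarith
  have hq : (0:ℝ) < 1 - e/8 := by linarith
  have hnum : x * (α * ((n:ℝ) - k) + 1) ≤ (1 - e/8) * ((1 - x) * (α * k)) := by
    have f1 : (n:ℝ) - k ≤ n * (1 - x - e/2) := by nlinarith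
    have key1 : x * (α * ((n:ℝ) - k) + 1) ≤ x * α * ((n:ℝ) * (1 - x - e/2)) + 1 := by
      linarith [mul_le_mul_of_nonneg_left f1 (le_of_lt (mul_pos hx0 hαpos))]
    have hb1 : (1 - x) * (x + e/2) ≤ 3/2 := by
      nlinarith [sq_nonneg x, mul_nonneg he.le hx0.le]
    have hbr : 5 * e / 16 ≤ (1 - e/8) * ((1 - x) * (x + e/2)) - x * (1 - x - e/2) := by
      nlinarith [mul_le_mul_of_nonneg_left hb1 he.le]
    have key3 : x * α * ((n:ℝ) * (1 - x - e/2)) + 1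
        ≤ (1 - e/8) * ((1 - x) * (α * ((n:ℝ) * (x + e/2)))) := by
      linarith [mul_le_mul_of_nonneg_left hbr (le_of_lt hP)]
    have key2 : (1 - e/8) * ((1 - x) * (α * ((n:ℝ) * (x + e/2))))
        ≤ (1 - e/8) * ((1 - x) * (α * k)) := by
      have := mul_le_mul_of_nonneg_left hklb (le_of_lt hαpos)
      linarith [mul_le_mul_of_nonneg_left this (mul_nonneg hq.le h1x.le)]
    linarith
  have hk0 : (0:ℝ) < α * k := by nlinarith
  have hden : (0:ℝ) < (1 - x) * (α * k) := by positivity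
  have hBle : (x * (α * ((n:ℝ) - k) + 1)) / ((1 - x) * (α * k)) ≤ 1 - e/8 :=
    (div_le_iff₀ hden).mpr (by linarith [hnum])
  have hB0 : (0:ℝ) ≤ (x * (α * ((n:ℝ) - k) + 1)) / ((1 - x) * (α * k)) := by
    have hA : (0:ℝ) < α * ((n:ℝ) - k) + 1 := by nlinarith
    positivity
  calc fbt α x n (k+1)
      ≤ ((x * (α * ((n:ℝ) - k) + 1)) / ((1 - x) * (α * k))) ^ α * fbt α x n k :=
        ratio_up hαpos hx0 hx1 hk1 hkn
    _ ≤ (1 - e/8) ^ α₀ * fbt α x n k := by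
        apply mul_le_mul_of_nonneg_right _ (fbt_nonneg hαpos hx0.le hx1.le (by omega))
        calc ((x * (α * ((n:ℝ) - k) + 1)) / ((1 - x) * (α * k))) ^ α
            ≤ (1 - e/8) ^ α := Real.rpow_le_rpow hB0 hBle hαpos.le
          _ ≤ (1 - e/8) ^ α₀ := Real.rpow_le_rpow_of_exponent_ge hq (by linarith) hα

lemma step_down {α₀ α x e : ℝ} {n k : ℕ} (hα₀ : 0 < α₀) (hα : α₀ ≤ α)
    (he : 0 < e) (he1 : e ≤ 1) (hex : e ≤ x) (hx1 : x < 1)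
    (hkub : (k:ℝ) + 1 ≤ (n:ℝ) * (x - e/2))
    (hbig : 4 ≤ α₀ * n * e) (hne : 4 ≤ (n:ℝ) * e) :
    fbt α x n k ≤ (1 - e/8) ^ α₀ * fbt α x n (k+1) := by
  have hαpos : 0 < α := lt_of_lt_of_le hα₀ hα
  have hx0 : 0 < x := lt_of_lt_of_le he hex
  have h1x : (0:ℝ) < 1 - x := by linarith
  have hn0 : (0:ℝ) < n := by nlinarith
  have hkn' : (k:ℝ) + 2 ≤ n := by nlinarith
  have hkn : k + 2 ≤ n := by exact_mod_cast hkn'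
  have hP : (0:ℝ) < α * n := by positivity
  have hPe : 4 ≤ (α * n) * e := by nlinarith
  have hq : (0:ℝ) < 1 - e/8 := by linarith
  have hnum : (1 - x) * (α * ((k:ℝ) + 1) + 1) ≤ (1 - e/8) * (x * (α * ((n:ℝ) - k - 1))) := by
    have f1 : (n:ℝ) * (1 - x + e/2) ≤ (n:ℝ) - k - 1 := by nlinarith
    have key1 : (1 - x) * (α * ((k:ℝ) + 1) + 1)
        ≤ (1 - x) * α * ((n:ℝ) * (x - e/2)) + 1 := by
      linarith [mul_le_mul_of_nonneg_left hkub (le_of_lt (mul_pos h1x hαpos))]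
    have hb1 : x * (1 - x + e/2) ≤ 3/2 := by
      nlinarith [sq_nonneg x, mul_le_mul he1 hx1.le hx0.le zero_le_one]
    have hbr : 5 * e / 16 ≤ (1 - e/8) * (x * (1 - x + e/2)) - (1 - x) * (x - e/2) := by
      nlinarith [mul_le_mul_of_nonneg_left hb1 he.le]
    have key3 : (1 - x) * α * ((n:ℝ) * (x - e/2)) + 1
        ≤ (1 - e/8) * (x * (α * ((n:ℝ) * (1 - x + e/2)))) := by
      linarith [mul_le_mul_of_nonneg_left hbr (le_of_lt hP)]
    have key2 : (1 - e/8) * (x * (α * ((n:ℝ) * (1 - x + e/2))))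
        ≤ (1 - e/8) * (x * (α * ((n:ℝ) - k - 1))) := by
      have := mul_le_mul_of_nonneg_left f1 (le_of_lt hαpos)
      linarith [mul_le_mul_of_nonneg_left this (mul_nonneg hq.le hx0.le)]
    linarith
  have hD : (0:ℝ) < α * ((n:ℝ) - k - 1) := by nlinarith
  have hden : (0:ℝ) < x * (α * ((n:ℝ) - k - 1)) := by positivity
  have hBle : ((1 - x) * (α * ((k:ℝ) + 1) + 1)) / (x * (α * ((n:ℝ) - k - 1))) ≤ 1 - e/8 :=
    (div_le_iff₀ hden).mpr (by linarith [hnum])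
  have hB0 : (0:ℝ) ≤ ((1 - x) * (α * ((k:ℝ) + 1) + 1)) / (x * (α * ((n:ℝ) - k - 1))) := by
    positivity
  calc fbt α x n k
      ≤ (((1 - x) * (α * ((k:ℝ) + 1) + 1)) / (x * (α * ((n:ℝ) - k - 1)))) ^ α
        * fbt α x n (k+1) := ratio_down hαpos hx0 hx1 hkn
    _ ≤ (1 - e/8) ^ α₀ * fbt α x n (k+1) := by
        apply mul_le_mul_of_nonneg_right _ (fbt_nonneg hαpos hx0.le hx1.le (by omega))
        calc (((1 - x) * (α * ((k:ℝ) + 1) + 1)) / (x * (α * ((n:ℝ) - k - 1)))) ^ α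
            ≤ (1 - e/8) ^ α := Real.rpow_le_rpow hB0 hBle hαpos.le
          _ ≤ (1 - e/8) ^ α₀ := Real.rpow_le_rpow_of_exponent_ge hq (by linarith) hα

lemma chain_up {f : ℕ → ℝ} {r : ℝ} (hr : 0 ≤ r) {p j : ℕ} (hpj : p ≤ j)
    (hstep : ∀ k, p ≤ k → k < j → f (k+1) ≤ r * f k) :
    f j ≤ r ^ (j - p) * f p := by
  induction j, hpj using Nat.le_induction with
  | base => simp
  | succ j hpj ih =>
    have h1 : f (j+1) ≤ r * f j := hstep j hpj (Nat.lt_succ_self j)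
    have h2 : f j ≤ r ^ (j - p) * f p := ih (fun k hk hk' => hstep k hk (by omega))
    calc f (j+1) ≤ r * f j := h1
      _ ≤ r * (r ^ (j - p) * f p) := mul_le_mul_of_nonneg_left h2 hr
      _ = r ^ (j + 1 - p) * f p := by
          rw [show j + 1 - p = (j - p) + 1 by omega, pow_succ]; ring

lemma chain_down {f : ℕ → ℝ} {r : ℝ} (hr : 0 ≤ r) {j p : ℕ} (hjp : j ≤ p)
    (hstep : ∀ k, j ≤ k → k < p → f k ≤ r * f (k+1)) :
    f j ≤ r ^ (p - j) * f p := by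
  induction p, hjp using Nat.le_induction with
  | base => simp
  | succ p hjp ih =>
    have h2 : f j ≤ r ^ (p - j) * f p := ih (fun k hk hk' => hstep k hk (by omega))
    have h1 : f p ≤ r * f (p+1) := hstep p hjp (Nat.lt_succ_self p)
    calc f j ≤ r ^ (p - j) * f p := h2
      _ ≤ r ^ (p - j) * (r * f (p+1)) := mul_le_mul_of_nonneg_left h1 (pow_nonneg hr _)
      _ = r ^ (p + 1 - j) * f (p+1) := by
          rw [show p + 1 - j = (p - j) + 1 by omega, pow_succ]; ring

/-- The normalizing constant `Z_{α,x}^{(n)}`. -/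
noncomputable def fracZ (α x : ℝ) (n : ℕ) : ℝ :=
  α * ∑ j ∈ Finset.range (n + 1),
    gbinom (α * n) (α * j) * x ^ (α * (j : ℝ)) * (1 - x) ^ (α * ((n : ℝ) - (j : ℝ)))

/-- The mass of `{j}` under the fractional binomial distribution `μ_{α,x}^{(n)}`. -/
noncomputable def fracW (α x : ℝ) (n j : ℕ) : ℝ :=
  (α / fracZ α x n) * gbinom (α * n) (α * j) * x ^ (α * (j : ℝ))
    * (1 - x) ^ (α * ((n : ℝ) - (j : ℝ)))

lemma fracW_eq {α : ℝ} (hα : 0 < α) (x : ℝ) (n j : ℕ) :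
    fracW α x n j = fbt α x n j / ∑ i ∈ Finset.range (n+1), fbt α x n i := by
  set S := ∑ i ∈ Finset.range (n+1), fbt α x n i with hSdef
  have hS : fracZ α x n = α * S := rfl
  have h2 : α / (α * S) = 1 / S := by
    rw [show α / (α * S) = α * 1 / (α * S) by rw [mul_one], mul_div_mul_left 1 S hα.ne']
  show (α / fracZ α x n) * gbinom (α * n) (α * j) * x ^ (α * (j : ℝ))
    * (1 - x) ^ (α * ((n : ℝ) - (j : ℝ))) = fbt α x n j / S
  rw [hS, h2]
  show _ = (gbinom (α * n) (α * j) * x ^ (α * (j : ℝ)) * (1 - x) ^ (α * ((n : ℝ) - (j : ℝ)))) / S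
  ring

lemma fracW_nonneg {α x : ℝ} (hα : 0 < α) (hx0 : 0 ≤ x) (hx1 : x ≤ 1) {n j : ℕ} (hj : j ≤ n) :
    0 ≤ fracW α x n j := by
  rw [fracW_eq hα]
  exact div_nonneg (fbt_nonneg hα hx0 hx1 hj)
    (Finset.sum_nonneg fun i hi => fbt_nonneg hα hx0 hx1 (Nat.lt_succ_iff.mp (Finset.mem_range.mp hi)))

lemma main_bound {α₀ α x e ε : ℝ} {n : ℕ} (hα₀ : 0 < α₀) (hα : α₀ ≤ α)
    (he : 0 < e) (he1 : e ≤ 1) (heε : e ≤ ε) (hx0 : 0 ≤ x) (hx1 : x ≤ 1)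
    (hbig : 4 ≤ α₀ * n * e) (hne : 16 ≤ (n:ℝ) * e) :
    ∑ j ∈ Finset.range (n+1), (if ε ≤ |(j:ℝ)/(n:ℝ) - x| then fracW α x n j else 0)
      ≤ ((n:ℝ) + 1) * ((1 - e/8) ^ α₀) ^ ((n:ℝ) * e / 4) := by
  have hαpos : 0 < α := lt_of_lt_of_le hα₀ hα
  have hq0 : (0:ℝ) < 1 - e/8 := by linarith
  have hq1 : (1:ℝ) - e/8 ≤ 1 := by linarith
  set r : ℝ := (1 - e/8) ^ α₀ with hrdef
  have hr0 : 0 < r := Real.rpow_pos_of_pos hq0 _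
  have hr1 : r ≤ 1 := Real.rpow_le_one hq0.le hq1 hα₀.le
  set R : ℝ := r ^ ((n:ℝ) * e / 4) with hRdef
  have hR0 : 0 < R := Real.rpow_pos_of_pos hr0 _
  have hn0 : (0:ℝ) < n := by nlinarith
  -- termwise bound
  have hterm : ∀ j ∈ Finset.range (n+1),
      (if ε ≤ |(j:ℝ)/(n:ℝ) - x| then fracW α x n j else 0) ≤ R := by
    intro j hj
    have hjn : j ≤ n := Nat.lt_succ_iff.mp (Finset.mem_range.mp hj)
    have hjn' : (j:ℝ) ≤ n := Nat.cast_le.2 hjn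
    split
    case isFalse => exact hR0.le
    case isTrue hbad =>
      have hbad' : e ≤ |(j:ℝ)/(n:ℝ) - x| := le_trans heε hbad
      have hdivle : (j:ℝ)/(n:ℝ) ≤ 1 := by
        rw [div_le_one hn0]; exact hjn'
      have hdivge : (0:ℝ) ≤ (j:ℝ)/(n:ℝ) := by positivity
      rcases le_total x ((j:ℝ)/(n:ℝ)) with hcase | hcase
      · -- upper tail
        rw [abs_of_nonneg (by linarith)] at hbad'
        have hjlb : (n:ℝ) * (x + e) ≤ j := by
          have : x + e ≤ (j:ℝ)/n := by linarith
          calc (n:ℝ) * (x + e) ≤ n * ((j:ℝ)/n) := by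
                exact mul_le_mul_of_nonneg_left this hn0.le
            _ = j := by field_simp
        have hx1' : x < 1 := by linarith
        rcases hx0.eq_or_lt with hx00 | hx0'
        · -- x = 0
          have hj1 : (0:ℝ) < j := by
            have h9 : (0:ℝ) ≤ (n:ℝ) * x := mul_nonneg hn0.le hx0
            linarith
          have hfbt0 : fbt α x n j = 0 := by
            unfold fbt
            rw [← hx00, Real.zero_rpow (ne_of_gt (mul_pos hαpos hj1))]
            ring
          rw [fracW_eq hαpos, hfbt0, zero_div]
          exact hR0.le
        · -- 0 < x, chain argument
          set p : ℕ := ⌈(n:ℝ) * (x + e/2)⌉₊ with hpdef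
          have harg : (0:ℝ) < (n:ℝ) * (x + e/2) := by positivity
          have hple : (p:ℝ) < (n:ℝ) * (x + e/2) + 1 := Nat.ceil_lt_add_one harg.le
          have hpge : (n:ℝ) * (x + e/2) ≤ p := Nat.le_ceil _
          have hp1 : 1 ≤ p := Nat.one_le_ceil_iff.mpr harg
          have hpj : p ≤ j := by
            have : (p:ℝ) < j := by linarith
            exact_mod_cast this.le
          have hjp : (n:ℝ) * e / 4 ≤ ((j - p : ℕ):ℝ) := by
            rw [Nat.cast_sub hpj]; linarith
          have hchain : fbt α x n j ≤ r ^ (j - p) * fbt α x n p := by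
            apply chain_up hr0.le hpj
            intro k hk hk'
            refine step_up hα₀ hα he he1 hx0' hx1' (le_trans hp1 hk) (by omega) ?_ hbig
            exact le_trans hpge (Nat.cast_le.2 hk)
          have hfp : 0 < fbt α x n p := fbt_pos hαpos hx0' hx1' (le_trans hpj hjn)
          have hSge : fbt α x n p ≤ ∑ i ∈ Finset.range (n+1), fbt α x n i :=
            Finset.single_le_sum
              (fun i hi => fbt_nonneg hαpos hx0 hx1 (Nat.lt_succ_iff.mp (Finset.mem_range.mp hi)))
              (Finset.mem_range.mpr (by omega))
          rw [fracW_eq hαpos]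
          calc fbt α x n j / ∑ i ∈ Finset.range (n+1), fbt α x n i
              ≤ fbt α x n j / fbt α x n p :=
                div_le_div_of_nonneg_left (fbt_nonneg hαpos hx0 hx1 hjn) hfp hSge
            _ ≤ r ^ (j - p) := by
                rw [div_le_iff₀ hfp]; exact hchain
            _ = r ^ (((j - p : ℕ):ℝ)) := (Real.rpow_natCast r (j-p)).symm
            _ ≤ R := Real.rpow_le_rpow_of_exponent_ge hr0 hr1 hjp
      · -- lower tail
        rw [abs_of_nonpos (by linarith), neg_sub] at hbad'
        have hjub : (j:ℝ) ≤ (n:ℝ) * (x - e) := by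
          have : (j:ℝ)/n ≤ x - e := by linarith
          calc (j:ℝ) = n * ((j:ℝ)/n) := by field_simp
            _ ≤ n * (x - e) := mul_le_mul_of_nonneg_left this hn0.le
        have hex : e ≤ x := by linarith
        have hx0' : 0 < x := lt_of_lt_of_le he hex
        rcases hx1.lt_or_eq with hx1' | hx11
        · -- x < 1, chain argument
          set p : ℕ := ⌊(n:ℝ) * (x - e/2)⌋₊ with hpdef
          have harg : (0:ℝ) ≤ (n:ℝ) * (x - e/2) := mul_nonneg hn0.le (by linarith)
          have hple : (p:ℝ) ≤ (n:ℝ) * (x - e/2) := Nat.floor_le harg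
          have hpgt : (n:ℝ) * (x - e/2) - 1 < p := Nat.sub_one_lt_floor _
          have hjp : j ≤ p := by
            have : (j:ℝ) < p := by linarith
            exact_mod_cast this.le
          have hpn : p ≤ n := by
            have : (p:ℝ) ≤ n := by
              have h9 : (0:ℝ) ≤ (n:ℝ) * (1 - x + e/2) := mul_nonneg hn0.le (by linarith)
              linarith
            exact_mod_cast this
          have hpj4 : (n:ℝ) * e / 4 ≤ ((p - j : ℕ):ℝ) := by
            rw [Nat.cast_sub hjp]; linarith
          have hchain : fbt α x n j ≤ r ^ (p - j) * fbt α x n p := by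
            apply chain_down hr0.le hjp
            intro k hk hk'
            refine step_down hα₀ hα he he1 hex hx1' ?_ hbig (by linarith)
            have : (k:ℝ) + 1 ≤ p := by exact_mod_cast Nat.succ_le_of_lt hk'
            linarith
          have hfp : 0 < fbt α x n p := fbt_pos hαpos hx0' hx1' hpn
          have hSge : fbt α x n p ≤ ∑ i ∈ Finset.range (n+1), fbt α x n i :=
            Finset.single_le_sum
              (fun i hi => fbt_nonneg hαpos hx0 hx1 (Nat.lt_succ_iff.mp (Finset.mem_range.mp hi)))
              (Finset.mem_range.mpr (by omega))
          rw [fracW_eq hαpos]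
          calc fbt α x n j / ∑ i ∈ Finset.range (n+1), fbt α x n i
              ≤ fbt α x n j / fbt α x n p :=
                div_le_div_of_nonneg_left (fbt_nonneg hαpos hx0 hx1 hjn) hfp hSge
            _ ≤ r ^ (p - j) := by
                rw [div_le_iff₀ hfp]; exact hchain
            _ = r ^ (((p - j : ℕ):ℝ)) := (Real.rpow_natCast r (p-j)).symm
            _ ≤ R := Real.rpow_le_rpow_of_exponent_ge hr0 hr1 hpj4
        · -- x = 1
          subst hx11
          have hjlt : (j:ℝ) < n := by
            have h9 : (0:ℝ) ≤ (n:ℝ) * e := mul_nonneg hn0.le he.le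
            linarith
          have hfbt0 : fbt α 1 n j = 0 := by
            unfold fbt
            rw [show (1:ℝ) - 1 = 0 by ring,
              Real.zero_rpow (ne_of_gt (mul_pos hαpos (by linarith : (0:ℝ) < (n:ℝ) - j)))]
            ring
          rw [fracW_eq hαpos, hfbt0, zero_div]
          exact hR0.le
  calc ∑ j ∈ Finset.range (n+1), (if ε ≤ |(j:ℝ)/(n:ℝ) - x| then fracW α x n j else 0)
      ≤ ∑ _j ∈ Finset.range (n+1), R := Finset.sum_le_sum hterm
    _ = ((n:ℝ) + 1) * R := by
        rw [Finset.sum_const, Finset.card_range, nsmul_eq_mul]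
        push_cast; ring

/-- Weak law of large numbers for the fractional binomial distributions, uniformly
over a compact set of `α`'s in `(0,∞)` and over `x ∈ [0,1]`. -/
theorem fracBinom_wlln (K : Set ℝ) (hK : IsCompact K) (hK' : K ⊆ Set.Ioi (0 : ℝ))
    (ε : ℝ) (hε : 0 < ε) :
    Filter.Tendsto (fun n : ℕ =>
      ⨆ α : K, ⨆ x : Set.Icc (0 : ℝ) 1,
        ∑ j ∈ Finset.range (n + 1),
          if ε ≤ |(j : ℝ) / (n : ℝ) - (x : ℝ)| then fracW (α : ℝ) (x : ℝ) n j else 0)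
      Filter.atTop (nhds 0) := by
  by_cases hKne : K.Nonempty
  swap
  · rw [Set.not_nonempty_iff_eq_empty] at hKne
    haveI : IsEmpty (↥K) := Set.isEmpty_coe_sort.mpr hKne
    simp only [Real.iSup_of_isEmpty]
    exact tendsto_const_nhds
  set e := min ε 1 with hedef
  have he : 0 < e := lt_min hε one_pos
  have he1 : e ≤ 1 := min_le_right _ _
  have heε : e ≤ ε := min_le_left _ _
  set α₀ := sInf K with hα₀def
  have hα₀K : α₀ ∈ K := hK.sInf_mem hKne
  have hα₀ : 0 < α₀ := hK' hα₀K
  have hα₀lb : ∀ b ∈ K, α₀ ≤ b := fun b hb => csInf_le hK.bddBelow hb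
  have hq0 : (0:ℝ) < 1 - e/8 := by linarith
  set r : ℝ := (1 - e/8) ^ α₀ with hrdef
  have hr0 : 0 < r := Real.rpow_pos_of_pos hq0 _
  have hr1 : r < 1 := Real.rpow_lt_one hq0.le (by linarith) hα₀
  set s : ℝ := r ^ (e/4) with hsdef
  have hs0 : 0 ≤ s := (Real.rpow_pos_of_pos hr0 _).le
  have hs1 : s < 1 := Real.rpow_lt_one hr0.le hr1 (by linarith)
  have hform : ∀ n : ℕ, r ^ ((n:ℝ) * e / 4) = s ^ n := by
    intro n
    rw [hsdef, ← Real.rpow_natCast (r ^ (e/4)) n, ← Real.rpow_mul hr0.le]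
    congr 1; ring
  have hB : Filter.Tendsto (fun n : ℕ => ((n:ℝ) + 1) * r ^ ((n:ℝ) * e / 4))
      Filter.atTop (nhds 0) := by
    have heq : (fun n : ℕ => ((n:ℝ) + 1) * r ^ ((n:ℝ) * e / 4))
        = fun n : ℕ => (n:ℝ) * s ^ n + s ^ n := by
      funext n; rw [hform n]; ring
    rw [heq]
    simpa using (tendsto_self_mul_const_pow_of_lt_one hs0 hs1).add
      (tendsto_pow_atTop_nhds_zero_of_lt_one hs0 hs1)
  apply tendsto_of_tendsto_of_tendsto_of_le_of_le' tendsto_const_nhds hB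
  · -- lower bound: 0 ≤ sup
    apply Filter.Eventually.of_forall
    intro n
    apply Real.iSup_nonneg
    intro α
    apply Real.iSup_nonneg
    intro x
    apply Finset.sum_nonneg
    intro j hj
    split
    · exact fracW_nonneg (hK' α.2) x.2.1 x.2.2 (Nat.lt_succ_iff.mp (Finset.mem_range.mp hj))
    · exact le_refl 0
  · -- upper bound, eventually
    have hev : ∀ᶠ n : ℕ in Filter.atTop, max (4/(α₀*e)) (16/e) ≤ (n:ℝ) :=
      tendsto_natCast_atTop_atTop.eventually_ge_atTop _
    filter_upwards [hev] with n hn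
    have hbig : 4 ≤ α₀ * (n:ℝ) * e := by
      have h1 : 4/(α₀*e) ≤ (n:ℝ) := le_trans (le_max_left _ _) hn
      have h2 : 4 ≤ (n:ℝ) * (α₀*e) := (div_le_iff₀ (by positivity)).mp h1
      linarith [h2]
    have hne16 : 16 ≤ (n:ℝ) * e := by
      have h1 : 16/e ≤ (n:ℝ) := le_trans (le_max_right _ _) hn
      exact (div_le_iff₀ he).mp h1
    have hB0 : (0:ℝ) ≤ ((n:ℝ) + 1) * r ^ ((n:ℝ) * e / 4) :=
      mul_nonneg (by positivity) (Real.rpow_nonneg hr0.le _)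
    apply Real.iSup_le _ hB0
    intro α
    apply Real.iSup_le _ hB0
    intro x
    exact main_bound hα₀ (hα₀lb _ α.2) he he1 heε x.2.1 x.2.2 hbig hne16
end

section
/- Let α > 0 and x ∈ (0,1), and define the rate function I_{α,x}^{L}(z) := α( z·log(z/x) + (1−z)·log((1−z)/(1−x)) ) for z ∈ [0,1] (with 0·log 0 := 0) and I_{α,x}^{L}(z) := +∞ otherwise. Then for every closed set F ⊂ ℝ, limsup_{n → ∞} (1/n)·log P(S_{α,x}^{(n)}/n ∈ F) ≤ −inf_{z ∈ F} I_{α,x}^{L}(z). -/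
open MeasureTheory Filter

/-- The fractional binomial distribution `μ_{α,x}^{(n)}` as a measure on `ℝ`. -/
noncomputable def fracMeasure (α x : ℝ) (n : ℕ) : Measure ℝ :=
  ∑ j ∈ Finset.range (n + 1), ENNReal.ofReal (fracW α x n j) • Measure.dirac (j : ℝ)

/-- The large deviation rate function `I_{α,x}^{(L)}`, with values in `EReal`
(`0 · log 0 = 0` holds automatically since `Real.log 0 = 0`). -/
noncomputable def rateL (α x : ℝ) (z : ℝ) : EReal :=
  if z ∈ Set.Icc (0 : ℝ) 1 then
    ((α * (z * Real.log (z / x) + (1 - z) * Real.log ((1 - z) / (1 - x))) : ℝ) : EReal)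
  else ⊤

open Real Set



lemma key1 (n : ℕ) (hn : 1 ≤ n) : ((n:ℝ)+1)^n ≤ (n:ℝ)^n * Real.exp 1 := by
  have hnp : (0:ℝ) < n := by exact_mod_cast hn
  have h1 : (n:ℝ) + 1 ≤ n * Real.exp (1/(n:ℝ)) := by
    have := Real.add_one_le_exp (1/(n:ℝ))
    have h2 : (n:ℝ) * (1/(n:ℝ) + 1) = n + 1 := by field_simp; ring
    nlinarith
  calc ((n:ℝ)+1)^n ≤ ((n:ℝ) * Real.exp (1/(n:ℝ)))^n := by
        apply pow_le_pow_left₀ (by positivity) h1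
  _ = (n:ℝ)^n * Real.exp 1 := by
        rw [mul_pow, ← Real.exp_nat_mul]
        congr 2
        field_simp

lemma key2 (n : ℕ) (hn : 1 ≤ n) : (n:ℝ)^(n+1) * Real.exp 1 ≤ ((n:ℝ)+1)^(n+1) := by
  have hnp : (0:ℝ) < n := by exact_mod_cast hn
  have h0 : (0:ℝ) < 1 - 1/((n:ℝ)+1) := by
    rw [sub_pos, div_lt_one (by positivity)]; linarith
  have h1 : Real.exp (1/((n:ℝ)+1)) ≤ ((n:ℝ)+1)/n := by
    have h2 : 1 - 1/((n:ℝ)+1) ≤ Real.exp (-(1/((n:ℝ)+1))) := by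
      have := Real.add_one_le_exp (-(1/((n:ℝ)+1))); linarith
    have h3 : (Real.exp (-(1/((n:ℝ)+1))))⁻¹ ≤ (1 - 1/((n:ℝ)+1))⁻¹ :=
      inv_anti₀ h0 h2
    rw [Real.exp_neg, inv_inv] at h3
    calc Real.exp (1/((n:ℝ)+1)) ≤ (1 - 1/((n:ℝ)+1))⁻¹ := h3
    _ = ((n:ℝ)+1)/n := by field_simp; rw [add_sub_cancel_right, div_self hnp.ne']
  calc (n:ℝ)^(n+1) * Real.exp 1 = (n * Real.exp (1/((n:ℝ)+1)))^(n+1) := by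
        rw [mul_pow, ← Real.exp_nat_mul]
        congr 2
        push_cast; field_simp
  _ ≤ ((n:ℝ)+1)^(n+1) := by
        apply pow_le_pow_left₀ (by positivity)
        calc (n:ℝ) * Real.exp (1/((n:ℝ)+1)) ≤ (n:ℝ) * (((n:ℝ)+1)/n) := by nlinarith [Real.exp_pos (1/((n:ℝ)+1))]
        _ = (n:ℝ)+1 := by field_simp

lemma factorial_ge (n : ℕ) (hn : 1 ≤ n) : (n:ℝ)^n * Real.exp (1 - n) ≤ n.factorial := by
  induction n with
  | zero => omega
  | succ m ih =>
    rcases Nat.eq_or_lt_of_le hn with h | h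
    · simp [← h]
    · have hm : 1 ≤ m := by omega
      have hmp : (0:ℝ) < m := by exact_mod_cast hm
      have ihm := ih hm
      have hk := key1 m hm
      rw [Nat.factorial_succ]
      push_cast
      have e1 : Real.exp (1 - ((m:ℝ)+1)) * Real.exp 1 = Real.exp (1 - m) := by
        rw [← Real.exp_add]; ring_nf
      calc ((m:ℝ)+1)^(m+1) * Real.exp (1 - ((m:ℝ)+1))
          = ((m:ℝ)+1) * (((m:ℝ)+1)^m * Real.exp (1 - ((m:ℝ)+1))) := by ring
      _ ≤ ((m:ℝ)+1) * (((m:ℝ)^m * Real.exp 1) * Real.exp (1 - ((m:ℝ)+1))) := by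
          have := Real.exp_pos (1 - ((m:ℝ)+1))
          apply mul_le_mul_of_nonneg_left _ (by positivity)
          apply mul_le_mul_of_nonneg_right hk this.le
      _ = ((m:ℝ)+1) * ((m:ℝ)^m * Real.exp (1 - m)) := by
          rw [← e1]; ring
      _ ≤ ((m:ℝ)+1) * (m.factorial) := by
          apply mul_le_mul_of_nonneg_left ihm (by positivity)

lemma factorial_le (n : ℕ) (hn : 1 ≤ n) : (n.factorial : ℝ) ≤ (n:ℝ)^(n+1) * Real.exp (1 - n) := by
  induction n with
  | zero => omega
  | succ m ih =>
    rcases Nat.eq_or_lt_of_le hn with h | h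
    · simp [← h]
    · have hm : 1 ≤ m := by omega
      have hmp : (0:ℝ) < m := by exact_mod_cast hm
      have ihm := ih hm
      have hk := key2 m hm
      rw [Nat.factorial_succ]
      push_cast
      have e1 : Real.exp (1 - (m:ℝ)) = Real.exp (1 - ((m:ℝ)+1)) * Real.exp 1 := by
        rw [← Real.exp_add]; ring_nf
      calc ((m:ℝ)+1) * (m.factorial : ℝ) ≤ ((m:ℝ)+1) * ((m:ℝ)^(m+1) * Real.exp (1 - m)) := by
            apply mul_le_mul_of_nonneg_left ihm (by positivity)
      _ = ((m:ℝ)+1) * (((m:ℝ)^(m+1) * Real.exp 1) * Real.exp (1 - ((m:ℝ)+1))) := by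
            rw [e1]; ring
      _ ≤ ((m:ℝ)+1) * (((m:ℝ)+1)^(m+1) * Real.exp (1 - ((m:ℝ)+1))) := by
            have := Real.exp_pos (1 - ((m:ℝ)+1))
            apply mul_le_mul_of_nonneg_left _ (by positivity)
            apply mul_le_mul_of_nonneg_right hk this.le
      _ = ((m:ℝ)+1)^(m+1+1) * Real.exp (1 - ((m:ℝ)+1)) := by ring


-- upper bound by endpoints for log Gamma on an interval
lemma logGamma_le_max {a b t : ℝ} (ha : 0 < a) (hab : a ≤ b) (ht : t ∈ Icc a b) :
    Real.log (Real.Gamma t) ≤ max (Real.log (Real.Gamma a)) (Real.log (Real.Gamma b)) := by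
  have hb : (0:ℝ) < b := lt_of_lt_of_le ha hab
  have := Real.convexOn_log_Gamma.le_on_segment (x := a) (y := b)
    (mem_Ioi.2 ha) (mem_Ioi.2 hb) (by rwa [segment_eq_Icc hab])
  simpa using this

lemma Gamma_le_max {a b t : ℝ} (ha : 0 < a) (hab : a ≤ b) (ht : t ∈ Icc a b) :
    Real.Gamma t ≤ max (Real.Gamma a) (Real.Gamma b) := by
  have htpos : 0 < t := lt_of_lt_of_le ha ht.1
  have h := logGamma_le_max ha hab ht
  have h2 : max (Real.log (Real.Gamma a)) (Real.log (Real.Gamma b))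
      = Real.log (max (Real.Gamma a) (Real.Gamma b)) := by
    rcases max_cases (Real.Gamma a) (Real.Gamma b) with ⟨h1, h2⟩ | ⟨h1, h2⟩
    · rw [h1, max_eq_left]
      exact Real.log_le_log (Real.Gamma_pos_of_pos (lt_of_lt_of_le ha hab)) h2
    · rw [h1, max_eq_right]
      exact Real.log_le_log (Real.Gamma_pos_of_pos ha) h2.le
  rw [h2] at h
  have hmax : 0 < max (Real.Gamma a) (Real.Gamma b) :=
    lt_max_of_lt_left (Real.Gamma_pos_of_pos ha)
  exact (Real.log_le_log_iff (Real.Gamma_pos_of_pos htpos) hmax).1 h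

-- midpoint log-convexity
lemma logGamma_midpoint {t t' : ℝ} (ht : 0 < t) (ht' : 0 < t') :
    Real.log (Real.Gamma ((t + t')/2)) ≤
      (Real.log (Real.Gamma t) + Real.log (Real.Gamma t'))/2 := by
  have := Real.convexOn_log_Gamma.2 (mem_Ioi.2 ht) (mem_Ioi.2 ht')
    (by norm_num : (0:ℝ) ≤ 1/2) (by norm_num : (0:ℝ) ≤ 1/2) (by norm_num)
  simp only [smul_eq_mul, Function.comp] at this
  calc Real.log (Real.Gamma ((t + t')/2)) = Real.log (Real.Gamma (1/2*t + 1/2*t')) := by ring_nf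
  _ ≤ 1/2 * Real.log (Real.Gamma t) + 1/2 * Real.log (Real.Gamma t') := this
  _ = (Real.log (Real.Gamma t) + Real.log (Real.Gamma t'))/2 := by ring

-- sandwich: for s ≥ 2, m = ⌊s⌋₊, m! ≤ Γ(s+1) ≤ (m+1)!
lemma Gamma_sandwich_upper {s : ℝ} (hs : 2 ≤ s) :
    Real.Gamma (s+1) ≤ ((Nat.floor s + 1).factorial : ℝ) := by
  set m := Nat.floor s with hm
  have hm2 : 2 ≤ m := Nat.le_floor (by exact_mod_cast hs)
  have hmle : (m:ℝ) ≤ s := Nat.floor_le (by linarith)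
  have hslt : s < m + 1 := Nat.lt_floor_add_one s
  have h1 : Real.Gamma (s+1) ≤ max (Real.Gamma ((m:ℝ)+1)) (Real.Gamma ((m:ℝ)+2)) := by
    apply Gamma_le_max (by positivity) (by linarith)
    constructor <;> [linarith; linarith]
  have e1 : Real.Gamma ((m:ℝ)+1) = (m.factorial : ℝ) := by
    exact_mod_cast Real.Gamma_nat_eq_factorial m
  have e2 : Real.Gamma ((m:ℝ)+2) = ((m+1).factorial : ℝ) := by
    have := Real.Gamma_nat_eq_factorial (m+1)
    push_cast at this ⊢
    convert this using 2
    ring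
  rw [e1, e2] at h1
  refine h1.trans ?_
  apply max_le
  · exact_mod_cast Nat.factorial_le (by omega)
  · rfl

lemma Gamma_sandwich_lower {s : ℝ} (hs : 2 ≤ s) :
    ((Nat.floor s).factorial : ℝ) ≤ Real.Gamma (s+1) := by
  set m := Nat.floor s with hm
  have hm2 : 2 ≤ m := Nat.le_floor (by exact_mod_cast hs)
  have hmr : (2:ℝ) ≤ m := by exact_mod_cast hm2
  have hmle : (m:ℝ) ≤ s := Nat.floor_le (by linarith)
  have hslt : s < m + 1 := Nat.lt_floor_add_one s
  set t' : ℝ := 2*(m:ℝ) + 1 - s with ht'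
  have ht'mem : t' ∈ Icc ((m:ℝ)) ((m:ℝ)+1) := by
    constructor <;> [simp only [ht']; simp only [ht']] <;> linarith
  have hmid : ((s+1) + t')/2 = (m:ℝ) + 1 := by rw [ht']; ring
  have e1 : Real.Gamma ((m:ℝ)+1) = (m.factorial : ℝ) := by
    exact_mod_cast Real.Gamma_nat_eq_factorial m
  have e0 : Real.Gamma ((m:ℝ)) = ((m-1).factorial : ℝ) := by
    have := Real.Gamma_nat_eq_factorial (m-1)
    have hc : ((m-1:ℕ):ℝ) + 1 = (m:ℝ) := by
      have : (1:ℕ) ≤ m := by omega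
      push_cast [Nat.cast_sub this]
      ring
    rw [hc] at this
    exact_mod_cast this
  -- Γ(t') ≤ m!
  have h2 : Real.log (Real.Gamma t') ≤ Real.log (m.factorial : ℝ) := by
    have := logGamma_le_max (a := (m:ℝ)) (b := (m:ℝ)+1) (by positivity) (by linarith) ht'mem
    refine this.trans ?_
    rw [e0, e1]
    apply max_le
    · apply Real.log_le_log (by positivity)
      exact_mod_cast Nat.factorial_le (by omega)
    · exact le_refl _
  have h3 := logGamma_midpoint (t := s+1) (t' := t') (by linarith) (by simp only [ht']; linarith)
  rw [hmid, e1] at h3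
  have h4 : Real.log (m.factorial : ℝ) ≤ Real.log (Real.Gamma (s+1)) := by nlinarith
  have hfp : (0:ℝ) < (m.factorial : ℝ) := by positivity
  exact (Real.log_le_log_iff hfp (Real.Gamma_pos_of_pos (by linarith))).1 h4


-- placeholders from previous stages
lemma Gamma_three : Real.Gamma 3 = 2 := by
  have := Real.Gamma_nat_eq_factorial 2
  norm_num at this
  convert this using 2
  norm_num

lemma Gamma_small_upper {t : ℝ} (ht : 1 ≤ t) (ht3 : t ≤ 3) : Real.Gamma t ≤ 2 := by
  have h := Gamma_le_max (a := 1) (b := 3) one_pos (by norm_num) ⟨ht, ht3⟩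
  rw [Real.Gamma_one, Gamma_three] at h
  simpa using h

lemma Gamma_small_lower {t : ℝ} (ht : 1 ≤ t) (ht3 : t ≤ 3) : (1:ℝ)/2 ≤ Real.Gamma t := by
  have ht0 : (0:ℝ) < t := by linarith
  have h4t : (1:ℝ) ≤ 4 - t := by linarith
  have h4t3 : (4:ℝ) - t ≤ 3 := by linarith
  have hmid : (t + (4 - t))/2 = 2 := by ring
  have h := logGamma_midpoint (t := t) (t' := 4 - t) ht0 (by linarith)
  rw [hmid, Real.Gamma_two, Real.log_one] at h
  have h2 : Real.log (Real.Gamma (4 - t)) ≤ Real.log 2 :=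
    Real.log_le_log (Real.Gamma_pos_of_pos (by linarith)) (Gamma_small_upper h4t h4t3)
  have h3 : -Real.log 2 ≤ Real.log (Real.Gamma t) := by linarith
  have := Real.exp_le_exp.2 h3
  rw [Real.exp_log (Real.Gamma_pos_of_pos ht0)] at this
  refine le_trans ?_ this
  rw [Real.exp_neg, Real.exp_log (by norm_num : (0:ℝ) < 2)]
  norm_num

lemma fg_bound (s : ℝ) (hs : 0 ≤ s) :
    |Real.log (Real.Gamma (s+1)) - (s * Real.log s - s)| ≤ 7 * (1 + Real.log (s+2)) := by
  have hlog2 : Real.log 2 ≤ 1 := by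
    have := Real.log_le_sub_one_of_pos (by norm_num : (0:ℝ) < 2); linarith
  have hlogs2 : 0 ≤ Real.log (s+2) := Real.log_nonneg (by linarith)
  rcases le_or_gt 2 s with h2 | h2
  · -- s ≥ 2
    set m := Nat.floor s with hm
    have hm2 : 2 ≤ m := Nat.le_floor (by exact_mod_cast h2)
    have hmr : (2:ℝ) ≤ m := by exact_mod_cast hm2
    have hmle : (m:ℝ) ≤ s := Nat.floor_le hs
    have hslt : s < m + 1 := Nat.lt_floor_add_one s
    have hs1 : (1:ℝ) ≤ s := by linarith
    have hmpos : (0:ℝ) < m := by linarith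
    have hspos : (0:ℝ) < s := by linarith
    -- log of factorial bounds
    have hfl : (m:ℝ) * Real.log m - m + 1 ≤ Real.log (m.factorial : ℝ) := by
      have h := factorial_ge m (by omega)
      have := Real.log_le_log (by positivity) h
      rw [Real.log_mul (by positivity) (Real.exp_ne_zero _), Real.log_pow, Real.log_exp] at this
      push_cast at this
      linarith
    have hfu : Real.log ((m+1).factorial : ℝ) ≤ ((m:ℝ)+2) * Real.log ((m:ℝ)+1) - m := by
      have h := factorial_le (m+1) (by omega)
      have := Real.log_le_log (by positivity) h
      rw [Real.log_mul (by positivity) (Real.exp_ne_zero _), Real.log_pow, Real.log_exp] at this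
      push_cast at this ⊢
      linarith
    have hGl := Gamma_sandwich_lower h2
    have hGu := Gamma_sandwich_upper h2
    have hlGl : Real.log (m.factorial : ℝ) ≤ Real.log (Real.Gamma (s+1)) :=
      Real.log_le_log (by positivity) hGl
    have hlGu : Real.log (Real.Gamma (s+1)) ≤ Real.log (((m+1).factorial : ℝ)) :=
      Real.log_le_log (Real.Gamma_pos_of_pos (by linarith)) (by exact_mod_cast hGu)
    -- comparison of g(s) with bounds
    have hlogsm : Real.log s - Real.log m = Real.log (s/m) := (Real.log_div hspos.ne' hmpos.ne').symm
    have hsm1 : Real.log (s/m) ≤ s/m - 1 := Real.log_le_sub_one_of_pos (by positivity)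
    have hsm0 : 0 ≤ Real.log (s/m) := Real.log_nonneg (by rw [le_div_iff₀ hmpos]; linarith)
    have hlogs_nonneg : 0 ≤ Real.log s := Real.log_nonneg hs1
    have hlogs_le : Real.log s ≤ Real.log (s+2) := Real.log_le_log hspos (by linarith)
    -- lower: g(s) - log Γ(s+1) ≤ log(s+2)
    have hlow : s * Real.log s - s - Real.log (Real.Gamma (s+1)) ≤ Real.log (s+2) := by
      have key : s * Real.log s - (m:ℝ) * Real.log m ≤ (s - m) * Real.log s + (s - m) := by
        have e : (m:ℝ) * Real.log (s/m) ≤ s - m := by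
          have := mul_le_mul_of_nonneg_left hsm1 hmpos.le
          calc (m:ℝ) * Real.log (s/m) ≤ m * (s/m - 1) := this
          _ = s - m := by field_simp
        nlinarith [hlogsm]
      nlinarith [hfl, hlGl]
    -- upper
    have hup : Real.log (Real.Gamma (s+1)) - (s * Real.log s - s) ≤ 2 * (1 + Real.log (s+2)) := by
      have hl1 : Real.log ((m:ℝ)+1) ≤ Real.log (s+1) := Real.log_le_log (by positivity) (by linarith)
      have hl1nn : 0 ≤ Real.log ((m:ℝ)+1) := Real.log_nonneg (by linarith)
      have hstep : ((m:ℝ)+2) * Real.log ((m:ℝ)+1) ≤ (s+2) * Real.log (s+1) := by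
        apply mul_le_mul (by linarith) hl1 hl1nn (by linarith)
      have hs1log : Real.log (s+1) - Real.log s = Real.log ((s+1)/s) :=
        (Real.log_div (by linarith) hspos.ne').symm
      have hs1b : Real.log ((s+1)/s) ≤ 1/s := by
        have := Real.log_le_sub_one_of_pos (show (0:ℝ) < (s+1)/s by positivity)
        have e : (s+1)/s - 1 = 1/s := by field_simp; ring
        linarith [e ▸ this]
      have hmul : s * Real.log (s+1) ≤ s * Real.log s + 1 := by
        have := mul_le_mul_of_nonneg_left hs1b hspos.le
        rw [mul_one_div, div_self hspos.ne'] at this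
        nlinarith [hs1log]
      have hlogs1 : Real.log (s+1) ≤ Real.log (s+2) := Real.log_le_log (by linarith) (by linarith)
      have hexp : (s+2) * Real.log (s+1) = s * Real.log (s+1) + 2 * Real.log (s+1) := by ring
      linarith [hfu, hlGu, hstep, hexp, hmul, hlogs1, hmle, hslt]
    rw [abs_le]
    constructor <;> linarith
  · -- 0 ≤ s < 2
    have ht1 : (1:ℝ) ≤ s + 1 := by linarith
    have ht3 : s + 1 ≤ 3 := by linarith
    have hGu := Gamma_small_upper ht1 ht3
    have hGl := Gamma_small_lower ht1 ht3
    have hGpos : 0 < Real.Gamma (s+1) := Real.Gamma_pos_of_pos (by linarith)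
    have hfu : Real.log (Real.Gamma (s+1)) ≤ Real.log 2 := Real.log_le_log hGpos hGu
    have hfl : -Real.log 2 ≤ Real.log (Real.Gamma (s+1)) := by
      have := Real.log_le_log (by norm_num : (0:ℝ) < 1/2) hGl
      have e : Real.log ((1:ℝ)/2) = -Real.log 2 := by
        rw [one_div, Real.log_inv]
      linarith [e ▸ this]
    have habs : |s * Real.log s| ≤ 2 := by
      rcases eq_or_lt_of_le hs with h0 | h0
    
      · rw [← h0]; simp
      rcases le_or_gt s 1 with hs1 | hs1
      · have hlneg : Real.log s ≤ 0 := Real.log_nonpos hs hs1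
        have hb : Real.log s⁻¹ ≤ s⁻¹ - 1 := Real.log_le_sub_one_of_pos (by positivity)
        have h5 : s * Real.log s⁻¹ ≤ s * (s⁻¹ - 1) := mul_le_mul_of_nonneg_left hb hs
        have e : s * (s⁻¹ - 1) = 1 - s := by field_simp
        have e2 : s * Real.log s⁻¹ = -(s * Real.log s) := by rw [Real.log_inv]; ring
        rw [abs_of_nonpos (mul_nonpos_of_nonneg_of_nonpos hs hlneg)]
        linarith
      · have hlpos : 0 ≤ Real.log s := Real.log_nonneg hs1.le
        have hls : Real.log s ≤ Real.log 2 := Real.log_le_log (by linarith) (by linarith)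
        rw [abs_of_nonneg (mul_nonneg hs hlpos)]
        have h5 : s * Real.log s ≤ 2 * Real.log 2 :=
          mul_le_mul (by linarith) hls hlpos (by norm_num)
        linarith
    have habs2 : |Real.log (Real.Gamma (s+1))| ≤ 1 := by
      rw [abs_le]; constructor <;> linarith
    rw [abs_le] at habs ⊢
    rw [abs_le] at habs2
    constructor <;> linarith

/- ### auxiliary definitions -/

noncomputable def Iti (α x z : ℝ) : ℝ :=
  α * (z * Real.log (z / x) + (1 - z) * Real.log ((1 - z) / (1 - x)))

noncomputable def fracTerm (α x : ℝ) (n j : ℕ) : ℝ :=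
  gbinom (α * n) (α * j) * x ^ (α * (j : ℝ)) * (1 - x) ^ (α * ((n : ℝ) - (j : ℝ)))

noncomputable def En (α : ℝ) (n : ℕ) : ℝ := 21 * (1 + Real.log (α * n + 2))

/- ### Gibbs inequality -/

lemma mul_log_ge {x z : ℝ} (hx : 0 < x) (hz : 0 ≤ z) : z - x ≤ z * Real.log (z / x) := by
  rcases eq_or_lt_of_le hz with h0 | h0
  · simp [← h0]; linarith
  · have h1 : Real.log (x / z) ≤ x / z - 1 := Real.log_le_sub_one_of_pos (by positivity)
    have h2 : Real.log (z / x) = -Real.log (x / z) := by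
      rw [← Real.log_inv]; congr 1; field_simp
    have h3 : z * Real.log (x / z) ≤ z * (x / z - 1) := mul_le_mul_of_nonneg_left h1 hz
    have h4 : z * (x / z - 1) = x - z := by field_simp
    rw [h2]; nlinarith

lemma Iti_nonneg {α x z : ℝ} (hα : 0 < α) (hx0 : 0 < x) (hx1 : x < 1)
    (hz : z ∈ Set.Icc (0:ℝ) 1) : 0 ≤ Iti α x z := by
  have h1 := mul_log_ge hx0 hz.1
  have h2 := mul_log_ge (show (0:ℝ) < 1 - x by linarith) (show (0:ℝ) ≤ 1 - z by linarith [hz.2])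
  have : 0 ≤ z * Real.log (z / x) + (1 - z) * Real.log ((1 - z) / (1 - x)) := by linarith
  exact mul_nonneg hα.le this

/- ### the key algebraic identity -/

lemma mul_log_mul {t c : ℝ} (ht : 0 ≤ t) (hc : c ≠ 0) :
    t * Real.log (t * c) = t * Real.log t + t * Real.log c := by
  rcases eq_or_lt_of_le ht with h0 | h0
  · simp [← h0]
  · rw [Real.log_mul h0.ne' hc]; ring

lemma key_identity {α x : ℝ} (hα : 0 < α) (hx0 : 0 < x) (hx1 : x < 1)
    {p q : ℝ} (hp : 0 ≤ p) (hq : 0 ≤ q) (hpq : 0 < p + q) :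
    (α*(p+q)) * Real.log (α*(p+q)) - (α*(p+q)) - ((α*p) * Real.log (α*p) - α*p)
      - ((α*q) * Real.log (α*q) - α*q) + α*p*Real.log x + α*q*Real.log (1-x)
    = -(α * (p * Real.log (p/((p+q)*x)) + q * Real.log (q/((p+q)*(1-x))))) := by
  have hx1' : (0:ℝ) < 1 - x := by linarith
  have h1 : (p+q) * Real.log (α*(p+q)) = (p+q) * Real.log (p+q) + (p+q) * Real.log α := by
    rw [mul_comm α (p+q)]; exact mul_log_mul hpq.le hα.ne'
  have h2 : p * Real.log (α*p) = p * Real.log p + p * Real.log α := by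
    rw [mul_comm α p]; exact mul_log_mul hp hα.ne'
  have h3 : q * Real.log (α*q) = q * Real.log q + q * Real.log α := by
    rw [mul_comm α q]; exact mul_log_mul hq hα.ne'
  have h4 : p * Real.log (p/((p+q)*x))
      = p * Real.log p - p * Real.log (p+q) - p * Real.log x := by
    have e : p/((p+q)*x) = p * ((p+q)*x)⁻¹ := by ring
    rw [e, mul_log_mul hp (by positivity), Real.log_inv,
      Real.log_mul hpq.ne' hx0.ne']
    ring
  have h5 : q * Real.log (q/((p+q)*(1-x)))
      = q * Real.log q - q * Real.log (p+q) - q * Real.log (1-x) := by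
    have e : q/((p+q)*(1-x)) = q * ((p+q)*(1-x))⁻¹ := by ring
    rw [e, mul_log_mul hq (by positivity), Real.log_inv,
      Real.log_mul hpq.ne' hx1'.ne']
    ring
  have hαl : α * ((p+q) * Real.log (α*(p+q))) = α * ((p+q) * Real.log (p+q) + (p+q) * Real.log α) := by rw [h1]
  nlinarith [h1, h2, h3, h4, h5]

/- ### log of a term -/

lemma fracTerm_pos {α x : ℝ} (hα : 0 < α) (hx0 : 0 < x) (hx1 : x < 1)
    {n j : ℕ} (hj : j ≤ n) : 0 < fracTerm α x n j := by
  have hjr : (j:ℝ) ≤ n := by exact_mod_cast hj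
  have h1 : 0 < Real.Gamma (α * n + 1) := Real.Gamma_pos_of_pos (by positivity)
  have h2 : 0 < Real.Gamma (α * j + 1) := Real.Gamma_pos_of_pos (by positivity)
  have h3 : 0 < Real.Gamma (α * n - α * j + 1) := by
    apply Real.Gamma_pos_of_pos; nlinarith
  have hxp : (0:ℝ) < x ^ (α * (j:ℝ)) := Real.rpow_pos_of_pos hx0 _
  have hyp : (0:ℝ) < (1-x) ^ (α * ((n:ℝ) - (j:ℝ))) := Real.rpow_pos_of_pos (by linarith) _
  unfold fracTerm gbinom
  positivity

lemma log_fracTerm {α x : ℝ} (hα : 0 < α) (hx0 : 0 < x) (hx1 : x < 1)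
    {n j : ℕ} (hj : j ≤ n) :
    Real.log (fracTerm α x n j)
      = Real.log (Real.Gamma (α * n + 1)) - Real.log (Real.Gamma (α * j + 1))
        - Real.log (Real.Gamma (α * ((n:ℝ) - (j:ℝ)) + 1))
        + α * j * Real.log x + α * ((n:ℝ) - (j:ℝ)) * Real.log (1-x) := by
  have hjr : (j:ℝ) ≤ n := by exact_mod_cast hj
  have h1 : 0 < Real.Gamma (α * n + 1) := Real.Gamma_pos_of_pos (by positivity)
  have h2 : 0 < Real.Gamma (α * j + 1) := Real.Gamma_pos_of_pos (by positivity)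
  have h3 : 0 < Real.Gamma (α * n - α * j + 1) := by
    apply Real.Gamma_pos_of_pos; nlinarith
  have hxp : (0:ℝ) < x ^ (α * (j:ℝ)) := Real.rpow_pos_of_pos hx0 _
  have hyp : (0:ℝ) < (1-x) ^ (α * ((n:ℝ) - (j:ℝ))) := Real.rpow_pos_of_pos (by linarith) _
  have e : α * n - α * j = α * ((n:ℝ) - (j:ℝ)) := by ring
  unfold fracTerm gbinom
  rw [Real.log_mul (by positivity) hyp.ne', Real.log_mul (by positivity) hxp.ne',
    Real.log_div h1.ne' (by positivity), Real.log_mul h2.ne' h3.ne',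
    Real.log_rpow hx0, Real.log_rpow (by linarith : (0:ℝ) < 1 - x), e]
  ring

/- ### the central estimate -/

lemma log_fracTerm_est {α x : ℝ} (hα : 0 < α) (hx0 : 0 < x) (hx1 : x < 1)
    {n j : ℕ} (hj : j ≤ n) (hn : 1 ≤ n) :
    |Real.log (fracTerm α x n j) + (n:ℝ) * Iti α x ((j:ℝ)/(n:ℝ))| ≤ En α n := by
  have hjr : (j:ℝ) ≤ n := by exact_mod_cast hj
  have hnr : (1:ℝ) ≤ n := by exact_mod_cast hn
  have hnp : (0:ℝ) < n := by linarith
  set p : ℝ := (j:ℝ) with hp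
  set q : ℝ := (n:ℝ) - (j:ℝ) with hq
  have hp0 : 0 ≤ p := by positivity
  have hq0 : 0 ≤ q := by simp [hq]; linarith
  have hpq : p + q = (n:ℝ) := by simp [hp, hq]
  have hpqpos : 0 < p + q := by rw [hpq]; exact hnp
  -- rewrite n * Iti (j/n)
  have hIti : (n:ℝ) * Iti α x (p/(n:ℝ))
      = α * (p * Real.log (p/((n:ℝ)*x)) + q * Real.log (q/((n:ℝ)*(1-x)))) := by
    unfold Iti
    have e1 : (p/(n:ℝ))/x = p/((n:ℝ)*x) := by rw [div_div]
    have e2 : 1 - p/(n:ℝ) = q/(n:ℝ) := by field_simp [hq]; linarith [hpq]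
    have e3 : (q/(n:ℝ))/(1-x) = q/((n:ℝ)*(1-x)) := by rw [div_div]
    rw [e1, e2, e3]
    field_simp
  -- the three Stirling errors
  have hb1 := fg_bound (α * (n:ℝ)) (by positivity)
  have hb2 := fg_bound (α * p) (by positivity)
  have hb3 := fg_bound (α * q) (by positivity)
  have hmono : ∀ s : ℝ, 0 ≤ s → s ≤ α * n →
      7 * (1 + Real.log (s+2)) ≤ 7 * (1 + Real.log (α * n + 2)) := by
    intro s hs hsn
    have := Real.log_le_log (show (0:ℝ) < s + 2 by linarith) (by linarith : s + 2 ≤ α * n + 2)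
    linarith
  have hb2' : |Real.log (Real.Gamma (α*p+1)) - (α*p * Real.log (α*p) - α*p)|
      ≤ 7 * (1 + Real.log (α * n + 2)) :=
    le_trans hb2 (hmono _ (by positivity) (by nlinarith))
  have hb3' : |Real.log (Real.Gamma (α*q+1)) - (α*q * Real.log (α*q) - α*q)|
      ≤ 7 * (1 + Real.log (α * n + 2)) :=
    le_trans hb3 (hmono _ (by positivity) (by nlinarith))
  have hid := key_identity hα hx0 hx1 hp0 hq0 hpqpos
  rw [hpq] at hid
  have hlog := log_fracTerm hα hx0 hx1 hj (n := n)
  -- assemble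
  rw [hlog, hIti]
  have expand : Real.log (Real.Gamma (α * n + 1)) - Real.log (Real.Gamma (α * j + 1))
        - Real.log (Real.Gamma (α * ((n:ℝ) - (j:ℝ)) + 1))
        + α * j * Real.log x + α * ((n:ℝ) - (j:ℝ)) * Real.log (1-x)
        + α * (p * Real.log (p/((n:ℝ)*x)) + q * Real.log (q/((n:ℝ)*(1-x))))
      = (Real.log (Real.Gamma (α * n + 1)) - (α*n * Real.log (α*n) - α*n))
        - (Real.log (Real.Gamma (α*p + 1)) - (α*p * Real.log (α*p) - α*p))
        - (Real.log (Real.Gamma (α*q + 1)) - (α*q * Real.log (α*q) - α*q)) := by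
    have hpj : (α * (j:ℝ)) = α * p := by rw [hp]
    rw [hpj]
    linarith [hid]
  rw [expand]
  unfold En
  have habs := abs_add_le (Real.log (Real.Gamma (α * n + 1)) - (α*n * Real.log (α*n) - α*n))
    (-(Real.log (Real.Gamma (α*p + 1)) - (α*p * Real.log (α*p) - α*p)))
  have h1 := hb1
  rw [abs_le] at hb1 hb2' hb3' ⊢
  constructor <;> [linarith [hb1.1, hb2'.2, hb3'.2]; linarith [hb1.2, hb2'.1, hb3'.1]]

/- ### Z bounds -/

lemma fracZ_eq_sum (α x : ℝ) (n : ℕ) :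
    fracZ α x n = α * ∑ j ∈ Finset.range (n + 1), fracTerm α x n j := rfl

lemma div_mem_Icc {n j : ℕ} (hj : j ≤ n) (hn : 1 ≤ n) : ((j:ℝ)/(n:ℝ)) ∈ Set.Icc (0:ℝ) 1 := by
  have hnr : (1:ℝ) ≤ n := by exact_mod_cast hn
  have hjr : (j:ℝ) ≤ n := by exact_mod_cast hj
  constructor
  · positivity
  · rw [div_le_one (by linarith)]; exact hjr

lemma fracTerm_le {α x : ℝ} (hα : 0 < α) (hx0 : 0 < x) (hx1 : x < 1)
    {n j : ℕ} (hj : j ≤ n) (hn : 1 ≤ n) :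
    fracTerm α x n j ≤ Real.exp (En α n) := by
  have hest := log_fracTerm_est hα hx0 hx1 hj hn
  rw [abs_le] at hest
  have hIti : 0 ≤ Iti α x ((j:ℝ)/(n:ℝ)) := Iti_nonneg hα hx0 hx1 (div_mem_Icc hj hn)
  have hnn : (0:ℝ) ≤ n := by positivity
  have hlog : Real.log (fracTerm α x n j) ≤ En α n := by nlinarith [hest.2]
  calc fracTerm α x n j = Real.exp (Real.log (fracTerm α x n j)) :=
        (Real.exp_log (fracTerm_pos hα hx0 hx1 hj)).symm
  _ ≤ Real.exp (En α n) := Real.exp_le_exp.2 hlog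

lemma fracZ_le {α x : ℝ} (hα : 0 < α) (hx0 : 0 < x) (hx1 : x < 1)
    {n : ℕ} (hn : 1 ≤ n) :
    fracZ α x n ≤ α * (((n:ℝ) + 1) * Real.exp (En α n)) := by
  rw [fracZ_eq_sum]
  apply mul_le_mul_of_nonneg_left _ hα.le
  calc ∑ j ∈ Finset.range (n + 1), fracTerm α x n j
      ≤ ∑ j ∈ Finset.range (n + 1), Real.exp (En α n) := by
        apply Finset.sum_le_sum
        intro j hjmem
        exact fracTerm_le hα hx0 hx1 (Nat.lt_succ_iff.1 (Finset.mem_range.1 hjmem)) hn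
  _ = ((n:ℝ) + 1) * Real.exp (En α n) := by
        rw [Finset.sum_const, Finset.card_range, nsmul_eq_mul]; push_cast; ring

lemma floor_le_n {x : ℝ} (hx0 : 0 < x) (hx1 : x < 1) (n : ℕ) : Nat.floor (x * (n:ℝ)) ≤ n := by
  have h : x * (n:ℝ) ≤ (n:ℝ) := by nlinarith [Nat.cast_nonneg (α := ℝ) n]
  have := Nat.floor_mono h
  simpa using this

lemma fracZ_ge {α x : ℝ} (hα : 0 < α) (hx0 : 0 < x) (hx1 : x < 1)
    {n : ℕ} (hn : 1 ≤ n) :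
    α * Real.exp (-((n:ℝ) * Iti α x ((Nat.floor (x * (n:ℝ)) : ℝ)/(n:ℝ))) - En α n)
      ≤ fracZ α x n := by
  set j₀ := Nat.floor (x * (n:ℝ)) with hj₀
  have hj₀n : j₀ ≤ n := floor_le_n hx0 hx1 n
  have hest := log_fracTerm_est hα hx0 hx1 hj₀n hn
  rw [abs_le] at hest
  have hterm : Real.exp (-((n:ℝ) * Iti α x ((j₀:ℝ)/(n:ℝ))) - En α n) ≤ fracTerm α x n j₀ := by
    calc Real.exp (-((n:ℝ) * Iti α x ((j₀:ℝ)/(n:ℝ))) - En α n)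
        ≤ Real.exp (Real.log (fracTerm α x n j₀)) := Real.exp_le_exp.2 (by linarith [hest.1])
    _ = fracTerm α x n j₀ := Real.exp_log (fracTerm_pos hα hx0 hx1 hj₀n)
  rw [fracZ_eq_sum]
  apply mul_le_mul_of_nonneg_left _ hα.le
  refine le_trans hterm ?_
  apply Finset.single_le_sum (f := fun j => fracTerm α x n j)
    (fun j hjmem => (fracTerm_pos hα hx0 hx1 (Nat.lt_succ_iff.1 (Finset.mem_range.1 hjmem))).le)
  exact Finset.mem_range.2 (Nat.lt_succ_iff.2 hj₀n)

lemma fracZ_pos {α x : ℝ} (hα : 0 < α) (hx0 : 0 < x) (hx1 : x < 1)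
    {n : ℕ} (hn : 1 ≤ n) : 0 < fracZ α x n :=
  lt_of_lt_of_le (by positivity) (fracZ_ge hα hx0 hx1 hn)

/- ### W bound -/

lemma fracW_eq_s2 (α x : ℝ) (n j : ℕ) :
    fracW α x n j = (α / fracZ α x n) * fracTerm α x n j := by
  unfold fracW fracTerm; ring

lemma fracW_le {α x : ℝ} (hα : 0 < α) (hx0 : 0 < x) (hx1 : x < 1)
    {n j : ℕ} (hj : j ≤ n) (hn : 1 ≤ n) {r₀ : ℝ} (hr : r₀ ≤ Iti α x ((j:ℝ)/(n:ℝ))) :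
    fracW α x n j
      ≤ Real.exp ((n:ℝ) * Iti α x ((Nat.floor (x * (n:ℝ)) : ℝ)/(n:ℝ)) + 2 * En α n
          - (n:ℝ) * r₀) := by
  set t := Iti α x ((Nat.floor (x * (n:ℝ)) : ℝ)/(n:ℝ)) with ht
  have hZge := fracZ_ge hα hx0 hx1 (n := n) hn
  have hZpos := fracZ_pos hα hx0 hx1 (n := n) hn
  have hdiv : α / fracZ α x n ≤ Real.exp ((n:ℝ) * t + En α n) := by
    have h1 : α / fracZ α x n ≤ α / (α * Real.exp (-((n:ℝ) * t) - En α n)) :=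
      div_le_div_of_nonneg_left hα.le (by positivity) hZge
    have h2 : α / (α * Real.exp (-((n:ℝ) * t) - En α n)) = Real.exp ((n:ℝ) * t + En α n) := by
      rw [eq_comm, eq_div_iff (by positivity), mul_comm α, ← mul_assoc, ← Real.exp_add]
      norm_num
    rw [h2] at h1; exact h1
  have hterm : fracTerm α x n j ≤ Real.exp (-((n:ℝ) * r₀) + En α n) := by
    have hest := log_fracTerm_est hα hx0 hx1 hj hn
    rw [abs_le] at hest
    have hnn : (0:ℝ) ≤ n := by positivity
    have hmul : (n:ℝ) * r₀ ≤ (n:ℝ) * Iti α x ((j:ℝ)/(n:ℝ)) := mul_le_mul_of_nonneg_left hr hnn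
    calc fracTerm α x n j = Real.exp (Real.log (fracTerm α x n j)) :=
          (Real.exp_log (fracTerm_pos hα hx0 hx1 hj)).symm
    _ ≤ Real.exp (-((n:ℝ) * r₀) + En α n) := Real.exp_le_exp.2 (by nlinarith [hest.2])
  rw [fracW_eq_s2]
  calc (α / fracZ α x n) * fracTerm α x n j
      ≤ Real.exp ((n:ℝ) * t + En α n) * Real.exp (-((n:ℝ) * r₀) + En α n) := by
        apply mul_le_mul hdiv hterm (fracTerm_pos hα hx0 hx1 hj).le (by positivity)
  _ = Real.exp ((n:ℝ) * t + 2 * En α n - (n:ℝ) * r₀) := by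
        rw [← Real.exp_add]; ring_nf

/- ### measure formula -/

lemma fracMeasure_apply (α x : ℝ) (n : ℕ) {S : Set ℝ} (hS : MeasurableSet S) :
    fracMeasure α x n S
      = ∑ j ∈ Finset.range (n + 1), ENNReal.ofReal (fracW α x n j) * S.indicator 1 (j:ℝ) := by
  unfold fracMeasure
  rw [Measure.finset_sum_apply]
  refine Finset.sum_congr rfl fun j _ => ?_
  rw [Measure.smul_apply, Measure.dirac_apply' _ hS, smul_eq_mul]

/- ### limit helpers -/

lemma tendsto_log_nat_inv : Tendsto (fun n : ℕ => Real.log n * ((n:ℝ))⁻¹) atTop (nhds 0) := by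
  have h := Real.isLittleO_log_id_atTop.tendsto_div_nhds_zero
  have h2 : Tendsto (fun n : ℕ => Real.log n / (n:ℝ)) atTop (nhds 0) :=
    h.comp tendsto_natCast_atTop_atTop
  simpa [div_eq_mul_inv] using h2

lemma tendsto_log_mul_inv (c d : ℝ) (hc : 0 < c) (hd : 1 ≤ d) :
    Tendsto (fun n : ℕ => Real.log (c * n + d) * ((n:ℝ))⁻¹) atTop (nhds 0) := by
  have hupper : Tendsto (fun n : ℕ => Real.log (c + d) * ((n:ℝ))⁻¹ + Real.log n * ((n:ℝ))⁻¹)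
      atTop (nhds 0) := by
    have h1 : Tendsto (fun n : ℕ => Real.log (c + d) * ((n:ℝ))⁻¹) atTop (nhds 0) := by
      have := tendsto_inv_atTop_nhds_zero_nat.const_mul (Real.log (c + d))
      simpa using this
    simpa using h1.add tendsto_log_nat_inv
  apply tendsto_of_tendsto_of_tendsto_of_le_of_le' tendsto_const_nhds hupper
  · filter_upwards [eventually_ge_atTop 1] with n hn
    have hnr : (1:ℝ) ≤ n := by exact_mod_cast hn
    have : (1:ℝ) ≤ c * n + d := by nlinarith
    have := Real.log_nonneg this
    positivity
  · filter_upwards [eventually_ge_atTop 1] with n hn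
    have hnr : (1:ℝ) ≤ n := by exact_mod_cast hn
    have hle : c * n + d ≤ (c + d) * n := by nlinarith
    have h1 : Real.log (c * n + d) ≤ Real.log ((c + d) * n) :=
      Real.log_le_log (by nlinarith) hle
    have h2 : Real.log ((c + d) * n) = Real.log (c + d) + Real.log n :=
      Real.log_mul (by positivity) (by positivity)
    have hinv : (0:ℝ) ≤ ((n:ℝ))⁻¹ := by positivity
    calc Real.log (c * n + d) * ((n:ℝ))⁻¹ ≤ Real.log ((c + d) * n) * ((n:ℝ))⁻¹ :=
          mul_le_mul_of_nonneg_right h1 hinv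
    _ = Real.log (c + d) * ((n:ℝ))⁻¹ + Real.log n * ((n:ℝ))⁻¹ := by rw [h2]; ring

lemma tendsto_floor_div {x : ℝ} (hx0 : 0 < x) (hx1 : x < 1) :
    Tendsto (fun n : ℕ => ((Nat.floor (x * (n:ℝ)) : ℝ))/(n:ℝ)) atTop (nhds x) := by
  have hlow : Tendsto (fun n : ℕ => x - ((n:ℝ))⁻¹) atTop (nhds x) := by
    have := tendsto_const_nhds (x := x) (f := atTop (α := ℕ))
    have h2 := this.sub tendsto_inv_atTop_nhds_zero_nat
    simpa using h2
  apply tendsto_of_tendsto_of_tendsto_of_le_of_le' hlow tendsto_const_nhds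
  · filter_upwards [eventually_ge_atTop 1] with n hn
    have hnr : (1:ℝ) ≤ n := by exact_mod_cast hn
    have hnp : (0:ℝ) < n := by linarith
    have h1 : x * (n:ℝ) < Nat.floor (x * (n:ℝ)) + 1 := Nat.lt_floor_add_one _
    rw [sub_le_iff_le_add, div_add' _ _ _ hnp.ne', le_div_iff₀ hnp]
    have hinv : ((n:ℝ))⁻¹ * (n:ℝ) = 1 := inv_mul_cancel₀ hnp.ne'
    nlinarith
  · filter_upwards [eventually_ge_atTop 1] with n hn
    have hnr : (1:ℝ) ≤ n := by exact_mod_cast hn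
    have hnp : (0:ℝ) < n := by linarith
    have h1 : (Nat.floor (x * (n:ℝ)) : ℝ) ≤ x * (n:ℝ) := Nat.floor_le (by positivity)
    rw [div_le_iff₀ hnp]
    linarith

lemma Iti_tendsto {α x : ℝ} (hx0 : 0 < x) (hx1 : x < 1) :
    Tendsto (fun n : ℕ => Iti α x ((Nat.floor (x * (n:ℝ)) : ℝ)/(n:ℝ))) atTop (nhds 0) := by
  have hcont : ContinuousAt (Iti α x) x := by
    unfold Iti
    apply ContinuousAt.mul continuousAt_const
    apply ContinuousAt.add
    · exact continuousAt_id.mul ((continuousAt_id.div_const x).log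
        (by simp only [id]; rw [div_self hx0.ne']; norm_num))
    · exact (continuousAt_const.sub continuousAt_id).mul
        (((continuousAt_const.sub continuousAt_id).div_const (1 - x)).log
          (by show (1 - x) / (1 - x) ≠ 0; rw [div_self (by linarith : (1:ℝ) - x ≠ 0)]; norm_num))
  have h0 : Iti α x x = 0 := by
    unfold Iti
    rw [div_self hx0.ne', div_self (by linarith : (1:ℝ) - x ≠ 0), Real.log_one]
    ring
  have := hcont.tendsto.comp (tendsto_floor_div hx0 hx1)
  rw [h0] at this
  exact this

lemma rateL_nonneg {α x : ℝ} (hα : 0 < α) (hx0 : 0 < x) (hx1 : x < 1) (z : ℝ) :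
    (0 : EReal) ≤ rateL α x z := by
  unfold rateL
  split_ifs with h
  · exact_mod_cast Iti_nonneg hα hx0 hx1 h
  · exact le_top

/-- LDP upper bound for `S_{α,x}^{(n)}/n` with speed `n` and rate function `I_{α,x}^{(L)}`:
for any closed set `F`, `limsup (1/n) log P(S/n ∈ F) ≤ −inf_F I`. -/
theorem fracBinom_ldp_upper (α x : ℝ) (hα : 0 < α) (hx : x ∈ Set.Ioo (0 : ℝ) 1)
    (F : Set ℝ) (hF : IsClosed F) :
    Filter.limsup (fun n : ℕ =>
        ((((n : ℝ)⁻¹ : ℝ) : EReal) *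
          ENNReal.log (fracMeasure α x n {y : ℝ | y / (n : ℝ) ∈ F})))
      Filter.atTop ≤ -(⨅ z ∈ F, rateL α x z) := by
  obtain ⟨hx0, hx1⟩ := hx
  set r : EReal := ⨅ z ∈ F, rateL α x z with hrdef
  have hr0 : (0:EReal) ≤ r := le_iInf fun z => le_iInf fun _ => rateL_nonneg hα hx0 hx1 z
  have hSmeas : ∀ n : ℕ, MeasurableSet {y : ℝ | y / (n:ℝ) ∈ F} := fun n =>
    hF.measurableSet.preimage (measurable_id.div_const _)
  by_cases hrtop : r = ⊤
  · -- the rate infimum is infinite: F misses [0,1], so the measures vanish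
    have hFI : ∀ z ∈ F, z ∉ Set.Icc (0:ℝ) 1 := by
      intro z hzF hzI
      have h1 : r ≤ rateL α x z := iInf₂_le z hzF
      rw [hrtop, top_le_iff] at h1
      unfold rateL at h1
      rw [if_pos hzI] at h1
      exact EReal.coe_ne_top _ h1
    have hev : ∀ᶠ n : ℕ in atTop,
        ((((n : ℝ)⁻¹ : ℝ) : EReal) *
          ENNReal.log (fracMeasure α x n {y : ℝ | y / (n : ℝ) ∈ F})) ≤ (⊥ : EReal) := by
      filter_upwards [eventually_ge_atTop 1] with n hn
      have hmeas0 : fracMeasure α x n {y : ℝ | y / (n:ℝ) ∈ F} = 0 := by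
        rw [fracMeasure_apply α x n (hSmeas n)]
        apply Finset.sum_eq_zero
        intro j hjmem
        have hj : j ≤ n := Nat.lt_succ_iff.1 (Finset.mem_range.1 hjmem)
        have hnotmem : (j:ℝ) ∉ {y : ℝ | y / (n:ℝ) ∈ F} := by
          intro hmem
          exact hFI _ hmem (div_mem_Icc hj hn)
        rw [Set.indicator_of_notMem hnotmem, mul_zero]
      rw [hmeas0, ENNReal.log_zero]
      have hpos : (0:ℝ) < ((n:ℝ))⁻¹ := by
        have : (0:ℝ) < n := by exact_mod_cast hn
        positivity
      rw [EReal.coe_mul_bot_of_pos (by exact_mod_cast hpos)]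
    refine le_trans (limsup_le_of_le ?_ hev) ?_
    · isBoundedDefault
    · rw [hrtop]; simp
  · -- main case
    have hrbot : r ≠ ⊥ := (lt_of_lt_of_le (by simp : (⊥:EReal) < 0) hr0).ne'
    set r₀ : ℝ := r.toReal with hr₀def
    have hrr : (r₀ : EReal) = r := EReal.coe_toReal hrtop hrbot
    have hr₀key : ∀ n : ℕ, 1 ≤ n → ∀ j : ℕ, j ≤ n → ((j:ℝ)/(n:ℝ)) ∈ F →
        r₀ ≤ Iti α x ((j:ℝ)/(n:ℝ)) := by
      intro n hn j hj hmem
      have h1 : r ≤ rateL α x ((j:ℝ)/(n:ℝ)) := iInf₂_le _ hmem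
      unfold rateL at h1
      rw [if_pos (div_mem_Icc hj hn)] at h1
      rw [← hrr] at h1
      exact_mod_cast h1
    set t : ℕ → ℝ := fun n => Iti α x ((Nat.floor (x * (n:ℝ)) : ℝ)/(n:ℝ)) with htdef
    set B : ℕ → ℝ := fun n =>
      ((n:ℝ) + 1) * Real.exp ((n:ℝ) * t n + 2 * En α n - (n:ℝ) * r₀) with hBdef
    have hBpos : ∀ n : ℕ, 0 < B n := by
      intro n; simp only [hBdef]; positivity
    -- measure bound
    have hμle : ∀ n : ℕ, 1 ≤ n →
        fracMeasure α x n {y : ℝ | y / (n:ℝ) ∈ F} ≤ ENNReal.ofReal (B n) := by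
      intro n hn
      rw [fracMeasure_apply α x n (hSmeas n)]
      have hbound : ∀ j ∈ Finset.range (n+1),
          ENNReal.ofReal (fracW α x n j) * Set.indicator {y : ℝ | y / (n:ℝ) ∈ F} 1 (j:ℝ)
            ≤ ENNReal.ofReal (Real.exp ((n:ℝ) * t n + 2 * En α n - (n:ℝ) * r₀)) := by
        intro j hjmem
        have hj : j ≤ n := Nat.lt_succ_iff.1 (Finset.mem_range.1 hjmem)
        by_cases hmem : (j:ℝ) ∈ {y : ℝ | y / (n:ℝ) ∈ F}
        · rw [Set.indicator_of_mem hmem, Pi.one_apply, mul_one]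
          apply ENNReal.ofReal_le_ofReal
          exact fracW_le hα hx0 hx1 hj hn (hr₀key n hn j hj hmem)
        · rw [Set.indicator_of_notMem hmem, mul_zero]
          exact zero_le
      calc ∑ j ∈ Finset.range (n+1),
            ENNReal.ofReal (fracW α x n j) * Set.indicator {y : ℝ | y / (n:ℝ) ∈ F} 1 (j:ℝ)
          ≤ ∑ _j ∈ Finset.range (n+1),
            ENNReal.ofReal (Real.exp ((n:ℝ) * t n + 2 * En α n - (n:ℝ) * r₀)) :=
            Finset.sum_le_sum hbound
      _ = (n+1 : ℕ) * ENNReal.ofReal (Real.exp ((n:ℝ) * t n + 2 * En α n - (n:ℝ) * r₀)) := by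
            rw [Finset.sum_const, Finset.card_range, nsmul_eq_mul]
      _ = ENNReal.ofReal (B n) := by
            rw [hBdef, ENNReal.ofReal_mul (by positivity)]
            congr 1
            rw [← ENNReal.ofReal_natCast (n+1)]
            congr 1
            push_cast; ring
    -- eventual bound on the log-scale sequence
    set v : ℕ → ℝ := fun n => ((n:ℝ))⁻¹ * Real.log (B n) with hvdef
    have hup : ∀ᶠ n : ℕ in atTop,
        ((((n : ℝ)⁻¹ : ℝ) : EReal) *
          ENNReal.log (fracMeasure α x n {y : ℝ | y / (n : ℝ) ∈ F}))
          ≤ ((v n : ℝ) : EReal) := by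
      filter_upwards [eventually_ge_atTop 1] with n hn
      have hlog1 : ENNReal.log (fracMeasure α x n {y : ℝ | y / (n:ℝ) ∈ F})
          ≤ ENNReal.log (ENNReal.ofReal (B n)) := ENNReal.log_monotone (hμle n hn)
      rw [ENNReal.log_ofReal_of_pos (hBpos n)] at hlog1
      have hinv0 : (0:ℝ) ≤ ((n:ℝ))⁻¹ := by positivity
      have h2 : ((((n : ℝ)⁻¹ : ℝ) : EReal) *
            ENNReal.log (fracMeasure α x n {y : ℝ | y / (n : ℝ) ∈ F}))
          ≤ (((n : ℝ)⁻¹ : ℝ) : EReal) * ((Real.log (B n) : ℝ) : EReal) :=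
        mul_le_mul_of_nonneg_left hlog1 (by exact_mod_cast hinv0)
      refine h2.trans_eq ?_
      rw [← EReal.coe_mul]
    -- the comparison sequence converges to -r₀
    have hv : Tendsto v atTop (nhds (-r₀)) := by
      have hev : ∀ᶠ n : ℕ in atTop, (Real.log ((1:ℝ) * n + 1) * ((n:ℝ))⁻¹ + t n
          + 2 * (21 * ((n:ℝ))⁻¹ + 21 * (Real.log (α * n + 2) * ((n:ℝ))⁻¹)) - r₀) = v n := by
        filter_upwards [eventually_ge_atTop 1] with n hn
        have hnp : (0:ℝ) < n := by exact_mod_cast hn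
        have hBlog : Real.log (B n)
            = Real.log ((n:ℝ) + 1) + ((n:ℝ) * t n + 2 * En α n - (n:ℝ) * r₀) := by
          rw [hBdef]
          rw [Real.log_mul (by positivity) (Real.exp_ne_zero _), Real.log_exp]
        simp only [hvdef]
        rw [hBlog]
        unfold En
        field_simp
        ring
      have hlim0 : Tendsto (fun n : ℕ => Real.log ((1:ℝ) * n + 1) * ((n:ℝ))⁻¹ + t n
          + 2 * (21 * ((n:ℝ))⁻¹ + 21 * (Real.log (α * n + 2) * ((n:ℝ))⁻¹)) - r₀)
          atTop (nhds (-r₀)) := by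
        have h1 := tendsto_log_mul_inv 1 1 one_pos le_rfl
        have h2 : Tendsto t atTop (nhds 0) := Iti_tendsto hx0 hx1
        have h3 := tendsto_inv_atTop_nhds_zero_nat.const_mul (21:ℝ)
        have h4 := (tendsto_log_mul_inv α 2 hα (by norm_num)).const_mul (21:ℝ)
        have := ((h1.add h2).add ((h3.add h4).const_mul (2:ℝ))).sub
          (tendsto_const_nhds (x := r₀) (f := atTop (α := ℕ)))
        simpa using this
      exact hlim0.congr' hev
    have hvE : Tendsto (fun n : ℕ => ((v n : ℝ) : EReal)) atTop (nhds ((-r₀ : ℝ) : EReal)) :=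
      (EReal.tendsto_coe).2 hv
    calc Filter.limsup (fun n : ℕ =>
          ((((n : ℝ)⁻¹ : ℝ) : EReal) *
            ENNReal.log (fracMeasure α x n {y : ℝ | y / (n : ℝ) ∈ F}))) atTop
        ≤ Filter.limsup (fun n : ℕ => ((v n : ℝ) : EReal)) atTop := limsup_le_limsup hup
    _ = ((-r₀ : ℝ) : EReal) := hvE.limsup_eq
    _ = -r := by rw [EReal.coe_neg, hrr]
end

section
/- For all real numbers a ≥ 0, b ≥ 0, and θ ∈ ℝ, one has |a − b·e^{iθ}| ≥ √(a² + b²)·|sin(θ/2)|. -/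
/-- For `a, b ≥ 0` and `θ ∈ ℝ`, `|a − b e^{iθ}| ≥ √(a² + b²) · |sin(θ/2)|`. -/
theorem abs_sub_mul_exp_ge (a b θ : ℝ) (ha : 0 ≤ a) (hb : 0 ≤ b) :
    Real.sqrt (a ^ 2 + b ^ 2) * |Real.sin (θ / 2)| ≤
      ‖(a : ℂ) - (b : ℂ) * Complex.exp ((θ : ℂ) * Complex.I)‖ := by
  have hz : ((a : ℂ) - (b : ℂ) * Complex.exp ((θ : ℂ) * Complex.I)) =
      Complex.mk (a - b * Real.cos θ) (-(b * Real.sin θ)) := by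
    rw [Complex.exp_mul_I]
    apply Complex.ext <;> simp [Complex.cos_ofReal_re, Complex.sin_ofReal_re]
  rw [hz, Complex.norm_def]
  have hL : 0 ≤ Real.sqrt (a ^ 2 + b ^ 2) * |Real.sin (θ / 2)| :=
    mul_nonneg (Real.sqrt_nonneg _) (abs_nonneg _)
  rw [show Real.sqrt (Complex.normSq (Complex.mk (a - b * Real.cos θ) (-(b * Real.sin θ))))
      = Real.sqrt ((a - b * Real.cos θ)^2 + (b * Real.sin θ)^2) by
    congr 1; simp [Complex.normSq_mk]; ring]
  rw [← Real.sqrt_sq_eq_abs, ← Real.sqrt_mul (by positivity)]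
  apply Real.sqrt_le_sqrt
  have h1 := Real.sin_sq_eq_half_sub (θ / 2)
  rw [show 2 * (θ / 2) = θ by ring] at h1
  have h2 : Real.cos θ ≤ 1 := Real.cos_le_one θ
  have h3 : -1 ≤ Real.cos θ := Real.neg_one_le_cos θ
  have h4 : Real.sin θ ^ 2 = 1 - Real.cos θ ^ 2 := Real.sin_sq θ
  nlinarith [sq_nonneg (a - b), sq_nonneg (a + b), mul_nonneg ha hb,
    mul_nonneg (mul_nonneg ha hb) (sub_nonneg.2 h2)]
end

section
/- Let α > 0 and x ∈ (0,1). Then for every ξ ∈ ℝ, lim_{n → ∞} (1/n)·log( Σ_{j=0}^n e^{ξj}·μ_{α,x}^{(n)}({j}) ) = α·log(1 − x + x·e^{ξ/α}). -/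
open MeasureTheory Filter
open Real Set

noncomputable def Sfun (α y b : ℝ) (n : ℕ) : ℝ :=
  ∑ j ∈ Finset.range (n + 1),
    gbinom (α * n) (α * j) * y ^ (α * (j : ℝ)) * b ^ (α * ((n : ℝ) - (j : ℝ)))

lemma rpow_self_pos {a : ℝ} (ha : 0 ≤ a) : 0 < a ^ a := by
  rcases eq_or_lt_of_le ha with h | h
  · simp [← h]
  · exact Real.rpow_pos_of_pos h a

lemma gamma_lower (s : ℝ) (hs : 0 ≤ s) :
    s ^ s * Real.exp (-s) / Real.exp 1 ≤ Real.Gamma (s + 1) := by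
  have hs1 : (0:ℝ) < s + 1 := by linarith
  rw [Real.Gamma_eq_integral hs1]
  have hint : IntegrableOn (fun x => Real.exp (-x) * x ^ (s + 1 - 1)) (Ioi 0) :=
    Real.GammaIntegral_convergent hs1
  have hsub : Ioc s (s+1) ⊆ Ioi (0:ℝ) := fun x hx => lt_of_le_of_lt hs hx.1
  have step1 : s ^ s * Real.exp (-s) / Real.exp 1
      = ∫ _x in Ioc s (s+1), (Real.exp (-(s+1)) * s ^ s) := by
    rw [setIntegral_const]
    simp [Real.volume_Ioc, Real.exp_add, Real.exp_neg]
    ring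
  have step2 : (∫ _x in Ioc s (s+1), (Real.exp (-(s+1)) * s ^ s))
      ≤ ∫ x in Ioc s (s+1), Real.exp (-x) * x ^ (s + 1 - 1) := by
    refine setIntegral_mono_on (integrableOn_const measure_Ioc_lt_top.ne)
      (hint.mono_set hsub) measurableSet_Ioc (fun x hx => ?_)
    have hx1 : s < x := hx.1
    have hx2 : x ≤ s + 1 := hx.2
    have h1 : Real.exp (-(s+1)) ≤ Real.exp (-x) := by
      apply Real.exp_le_exp.2; linarith
    have h2 : s ^ s ≤ x ^ (s + 1 - 1) := by
      rw [show s + 1 - 1 = s by ring]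
      exact Real.rpow_le_rpow hs hx1.le hs
    exact mul_le_mul h1 h2 (le_of_lt (rpow_self_pos hs)) (Real.exp_pos _).le
  have step3 : (∫ x in Ioc s (s+1), Real.exp (-x) * x ^ (s + 1 - 1))
      ≤ ∫ x in Ioi 0, Real.exp (-x) * x ^ (s + 1 - 1) := by
    refine setIntegral_mono_set hint ?_ (HasSubset.Subset.eventuallyLE hsub)
    filter_upwards [self_mem_ae_restrict measurableSet_Ioi] with x hx
    have : (0:ℝ) < x := hx
    positivity
  linarith [step1, step2, step3]

lemma gamma_upper (s : ℝ) (hs : 2 ≤ s) :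
    Real.Gamma (s + 1) ≤ Real.exp 2 * s * (s ^ s * Real.exp (-s)) := by
  have hs0 : (0:ℝ) < s := by linarith
  have hs1 : (0:ℝ) < s - 1 := by linarith
  set x₀ : ℝ := s^2/(s-1) with hx₀def
  have hx₀ : 0 < x₀ := by positivity
  have hsx₀ : s / x₀ = 1 - s⁻¹ := by
    rw [hx₀def]; field_simp
  set K : ℝ := x₀ ^ s * Real.exp (-s) with hKdef
  have hK : 0 < K := by positivity
  -- pointwise bound
  have hpt : ∀ x : ℝ, x ∈ Ioi (0:ℝ) → Real.exp (-x) * x ^ s ≤ K * Real.exp (-(s⁻¹ * x)) := by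
    intro x hx
    have hx0 : (0:ℝ) < x := hx
    have hlog : Real.log x - Real.log x₀ ≤ x / x₀ - 1 := by
      have := Real.log_le_sub_one_of_pos (show 0 < x / x₀ by positivity)
      rwa [Real.log_div (ne_of_gt hx0) (ne_of_gt hx₀)] at this
    have e1 : Real.exp (-x) * x ^ s = Real.exp (Real.log x * s - x) := by
      rw [Real.rpow_def_of_pos hx0, ← Real.exp_add]; ring_nf
    have e2 : K * Real.exp (-(s⁻¹ * x)) = Real.exp (Real.log x₀ * s - s - s⁻¹ * x) := by
      rw [hKdef, Real.rpow_def_of_pos hx₀, ← Real.exp_add, ← Real.exp_add]; ring_nf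
    rw [e1, e2]
    apply Real.exp_le_exp.2
    have h2 : s * (x / x₀) = x * (1 - s⁻¹) := by
      rw [mul_comm x (1 - s⁻¹), ← hsx₀]; field_simp
    nlinarith [mul_le_mul_of_nonneg_left hlog hs0.le]
  -- integral comparison
  have hint : IntegrableOn (fun x => Real.exp (-x) * x ^ (s + 1 - 1)) (Ioi 0) :=
    Real.GammaIntegral_convergent (by linarith)
  have hint2 : IntegrableOn (fun x : ℝ => K * Real.exp (-(s⁻¹ * x))) (Ioi 0) := by
    have := (exp_neg_integrableOn_Ioi 0 (show (0:ℝ) < s⁻¹ by positivity)).const_mul K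
    have h' : Integrable (fun x : ℝ => K * Real.exp (-(s⁻¹ * x))) (volume.restrict (Ioi 0)) := by
      simpa [neg_mul] using this
    exact h'
  have hmain : Real.Gamma (s + 1) ≤ ∫ x in Ioi (0:ℝ), K * Real.exp (-(s⁻¹ * x)) := by
    rw [Real.Gamma_eq_integral (show (0:ℝ) < s + 1 by linarith)]
    refine setIntegral_mono_on hint hint2 measurableSet_Ioi (fun x hx => ?_)
    have := hpt x hx
    simpa [add_sub_cancel_right] using this
  have hval : (∫ x in Ioi (0:ℝ), K * Real.exp (-(s⁻¹ * x))) = K * s := by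
    rw [MeasureTheory.integral_const_mul]
    have := integral_comp_mul_left_Ioi (fun x => Real.exp (-x)) 0 (show (0:ℝ) < s⁻¹ by positivity)
    simp only [mul_zero] at this
    rw [this, integral_exp_neg_Ioi]
    simp [smul_eq_mul]
  -- bound K
  have hKle : K ≤ Real.exp 2 * (s ^ s * Real.exp (-s)) := by
    rw [hKdef]
    have hx₀eq : x₀ = s * (s / (s-1)) := by rw [hx₀def]; field_simp
    have h1 : x₀ ^ s = s ^ s * (s/(s-1)) ^ s := by
      rw [hx₀eq, Real.mul_rpow hs0.le (by positivity)]
    have h2 : (s/(s-1)) ^ s ≤ Real.exp 2 := by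
      rw [Real.rpow_def_of_pos (by positivity)]
      apply Real.exp_le_exp.2
      have hl : Real.log (s/(s-1)) ≤ s/(s-1) - 1 :=
        Real.log_le_sub_one_of_pos (by positivity)
      have h3 : s/(s-1) - 1 = 1/(s-1) := by field_simp; ring
      have h4 : Real.log (s/(s-1)) * s ≤ (1/(s-1)) * s := by
        apply mul_le_mul_of_nonneg_right _ hs0.le
        rw [← h3]; exact hl
      refine h4.trans ?_
      rw [div_mul_eq_mul_div, one_mul, div_le_iff₀ hs1]
      linarith
    calc x₀ ^ s * Real.exp (-s) = (s/(s-1))^s * (s ^ s * Real.exp (-s)) := by rw [h1]; ring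
      _ ≤ Real.exp 2 * (s ^ s * Real.exp (-s)) := by
          apply mul_le_mul_of_nonneg_right h2 (by positivity)
  calc Real.Gamma (s+1) ≤ K * s := hmain.trans (le_of_eq hval)
    _ ≤ Real.exp 2 * (s ^ s * Real.exp (-s)) * s := mul_le_mul_of_nonneg_right hKle hs0.le
    _ = Real.exp 2 * s * (s ^ s * Real.exp (-s)) := by ring

lemma core_ineq {a c y b : ℝ} (ha : 0 ≤ a) (hc : 0 ≤ c) (hy : 0 < y) (hb : 0 < b) :
    (a+c)^(a+c) * (y^a * b^c) ≤ (y+b)^(a+c) * (a^a * c^c) := by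
  have hyb : 0 < y + b := by linarith
  rcases eq_or_lt_of_le ha with ha0 | ha0
  · subst ha0
    simp only [zero_add, Real.rpow_zero, one_mul]
    rw [mul_comm (c ^ c) (b ^ c)]
    exact mul_le_mul_of_nonneg_right (Real.rpow_le_rpow hb.le (by linarith) hc) (by positivity)
  rcases eq_or_lt_of_le hc with hc0 | hc0
  · subst hc0
    simp only [add_zero, Real.rpow_zero, mul_one, one_mul]
    rw [mul_comm (a ^ a) (y ^ a)]
    exact mul_le_mul_of_nonneg_right (Real.rpow_le_rpow hy.le (by linarith) ha) (by positivity)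
  -- main case
  have hs : 0 < a + c := by linarith
  set u : ℝ := (a+c)*y/(a*(y+b)) with hu_def
  set v : ℝ := (a+c)*b/(c*(y+b)) with hv_def
  have hu : 0 < u := by positivity
  have hv : 0 < v := by positivity
  have h1 : Real.log u ≤ u - 1 := Real.log_le_sub_one_of_pos hu
  have h2 : Real.log v ≤ v - 1 := Real.log_le_sub_one_of_pos hv
  have h3 : a*u + c*v = a + c := by
    rw [hu_def, hv_def]; field_simp
  have h4 : a * Real.log u + c * Real.log v ≤ 0 := by
    nlinarith [mul_le_mul_of_nonneg_left h1 ha0.le, mul_le_mul_of_nonneg_left h2 hc0.le]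
  have h5 : Real.log u = Real.log (a+c) + Real.log y - (Real.log a + Real.log (y+b)) := by
    rw [hu_def, Real.log_div (by positivity) (by positivity),
      Real.log_mul (by positivity) (by positivity), Real.log_mul (by positivity) (by positivity)]
  have h6 : Real.log v = Real.log (a+c) + Real.log b - (Real.log c + Real.log (y+b)) := by
    rw [hv_def, Real.log_div (by positivity) (by positivity),
      Real.log_mul (by positivity) (by positivity), Real.log_mul (by positivity) (by positivity)]
  rw [h5, h6] at h4
  have key : (a+c)*Real.log (a+c) + (a*Real.log y + c*Real.log b)
      ≤ (a+c)*Real.log (y+b) + (a*Real.log a + c*Real.log c) := by nlinarith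
  have e1 : (a+c)^(a+c) * (y^a * b^c)
      = Real.exp ((a+c)*Real.log (a+c) + (a*Real.log y + c*Real.log b)) := by
    rw [Real.rpow_def_of_pos hs, Real.rpow_def_of_pos hy, Real.rpow_def_of_pos hb,
      ← Real.exp_add, ← Real.exp_add]
    ring_nf
  have e2 : (y+b)^(a+c) * (a^a * c^c)
      = Real.exp ((a+c)*Real.log (y+b) + (a*Real.log a + c*Real.log c)) := by
    rw [Real.rpow_def_of_pos hyb, Real.rpow_def_of_pos ha0, Real.rpow_def_of_pos hc0,
      ← Real.exp_add, ← Real.exp_add]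
    ring_nf
  rw [e1, e2]
  exact Real.exp_le_exp.2 key
lemma term_upper {α y b : ℝ} (hα : 0 < α) (hy : 0 < y) (hb : 0 < b)
    {n j : ℕ} (hj : j ≤ n) (hs2 : 2 ≤ α * (n:ℝ)) :
    gbinom (α * n) (α * j) * y ^ (α * (j:ℝ)) * b ^ (α * ((n:ℝ) - (j:ℝ)))
      ≤ Real.exp 4 * (α * n) * (y + b) ^ (α * (n:ℝ)) := by
  have hjn : (j:ℝ) ≤ (n:ℝ) := Nat.cast_le.2 hj
  have ha : 0 ≤ α * (j:ℝ) := by positivity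
  have hc : 0 ≤ α * ((n:ℝ) - (j:ℝ)) := mul_nonneg hα.le (by linarith)
  have hyb : 0 < y + b := by linarith
  have hga : 0 < Real.Gamma (α * (j:ℝ) + 1) := Real.Gamma_pos_of_pos (by linarith)
  have hgc : 0 < Real.Gamma (α * ((n:ℝ) - (j:ℝ)) + 1) := Real.Gamma_pos_of_pos (by linarith)
  have hsub : α * (n:ℝ) - α * (j:ℝ) = α * ((n:ℝ) - (j:ℝ)) := by ring
  rw [gbinom, hsub, div_mul_eq_mul_div, div_mul_eq_mul_div, div_le_iff₀ (by positivity)]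
  have hac : α * (j:ℝ) + α * ((n:ℝ) - (j:ℝ)) = α * (n:ℝ) := by ring
  have hcore := core_ineq ha hc hy hb
  rw [hac] at hcore
  have hexps : Real.exp (-(α * (n:ℝ))) =
      Real.exp (-(α * (j:ℝ))) * Real.exp (-(α * ((n:ℝ) - (j:ℝ)))) := by
    rw [← Real.exp_add]; congr 1; ring
  have hla : (α * (j:ℝ)) ^ (α * (j:ℝ)) * Real.exp (-(α * (j:ℝ)))
      ≤ Real.exp 1 * Real.Gamma (α * (j:ℝ) + 1) := by
    have := gamma_lower (α * (j:ℝ)) ha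
    rw [div_le_iff₀ (Real.exp_pos 1)] at this
    linarith [this]
  have hlc : (α * ((n:ℝ) - (j:ℝ))) ^ (α * ((n:ℝ) - (j:ℝ))) * Real.exp (-(α * ((n:ℝ) - (j:ℝ))))
      ≤ Real.exp 1 * Real.Gamma (α * ((n:ℝ) - (j:ℝ)) + 1) := by
    have := gamma_lower (α * ((n:ℝ) - (j:ℝ))) hc
    rw [div_le_iff₀ (Real.exp_pos 1)] at this
    linarith [this]
  have hn0 : (0:ℝ) < α * n := by linarith
  calc Real.Gamma (α * (n:ℝ) + 1) * y ^ (α * (j:ℝ)) * b ^ (α * ((n:ℝ) - (j:ℝ)))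
      ≤ Real.exp 2 * (α * (n:ℝ)) * ((α * (n:ℝ)) ^ (α * (n:ℝ)) * Real.exp (-(α * (n:ℝ))))
          * y ^ (α * (j:ℝ)) * b ^ (α * ((n:ℝ) - (j:ℝ))) := by
        apply mul_le_mul_of_nonneg_right _ (by positivity)
        apply mul_le_mul_of_nonneg_right _ (by positivity)
        exact gamma_upper _ hs2
    _ = Real.exp 2 * (α * (n:ℝ)) * Real.exp (-(α * (n:ℝ)))
          * ((α * (n:ℝ)) ^ (α * (n:ℝ)) * (y ^ (α * (j:ℝ)) * b ^ (α * ((n:ℝ) - (j:ℝ))))) := by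
        ring
    _ ≤ Real.exp 2 * (α * (n:ℝ)) * Real.exp (-(α * (n:ℝ)))
          * ((y + b) ^ (α * (n:ℝ)) * ((α * (j:ℝ)) ^ (α * (j:ℝ))
              * (α * ((n:ℝ) - (j:ℝ))) ^ (α * ((n:ℝ) - (j:ℝ))))) := by
        apply mul_le_mul_of_nonneg_left hcore (by positivity)
    _ = Real.exp 2 * (α * (n:ℝ)) * (y + b) ^ (α * (n:ℝ))
          * (((α * (j:ℝ)) ^ (α * (j:ℝ)) * Real.exp (-(α * (j:ℝ))))
            * ((α * ((n:ℝ) - (j:ℝ))) ^ (α * ((n:ℝ) - (j:ℝ))) * Real.exp (-(α * ((n:ℝ) - (j:ℝ)))))) := by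
        rw [hexps]; ring
    _ ≤ Real.exp 2 * (α * (n:ℝ)) * (y + b) ^ (α * (n:ℝ))
          * ((Real.exp 1 * Real.Gamma (α * (j:ℝ) + 1))
            * (Real.exp 1 * Real.Gamma (α * ((n:ℝ) - (j:ℝ)) + 1))) := by
        apply mul_le_mul_of_nonneg_left _ (by positivity)
        exact mul_le_mul hla hlc (by positivity) (by positivity)
    _ = Real.exp 4 * (α * ↑n) * (y + b) ^ (α * (n:ℝ))
          * (Real.Gamma (α * (j:ℝ) + 1) * Real.Gamma (α * ((n:ℝ) - (j:ℝ)) + 1)) := by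
        rw [show Real.exp 4 = Real.exp 2 * (Real.exp 1 * Real.exp 1) by
          rw [← Real.exp_add, ← Real.exp_add]; norm_num]
        ring
lemma log_gamma_lower {s : ℝ} (hs : 0 < s) :
    s * Real.log s - s - 1 ≤ Real.log (Real.Gamma (s + 1)) := by
  have h := gamma_lower s hs.le
  have hpos : 0 < s ^ s * Real.exp (-s) / Real.exp 1 := by positivity
  have := Real.log_le_log hpos h
  rwa [Real.log_div (by positivity) (by positivity), Real.log_mul (by positivity) (by positivity),
    Real.log_rpow hs, Real.log_exp, Real.log_exp] at this
lemma log_gamma_upper {s : ℝ} (hs : 2 ≤ s) :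
    Real.log (Real.Gamma (s + 1)) ≤ 2 + Real.log s + s * Real.log s - s := by
  have hs0 : (0:ℝ) < s := by linarith
  have h := gamma_upper s hs
  have hpos : 0 < Real.Gamma (s+1) := Real.Gamma_pos_of_pos (by linarith)
  have := Real.log_le_log hpos h
  rw [Real.log_mul (by positivity) (by positivity), Real.log_mul (by positivity) (by positivity),
    Real.log_mul (by positivity) (by positivity),
    Real.log_rpow hs0, Real.log_exp, Real.log_exp] at this
  linarith

lemma term_log_lower {α y b : ℝ} (hα : 0 < α) (hy : 0 < y) (hb : 0 < b)
    {n j : ℕ} (hj : j ≤ n) (ha2 : 2 ≤ α * (j:ℝ)) (hc2 : 2 ≤ α * ((n:ℝ) - (j:ℝ))) :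
    α*(n:ℝ)*Real.log (α*(n:ℝ)) - α*(j:ℝ)*Real.log (α*(j:ℝ))
      - α*((n:ℝ)-(j:ℝ))*Real.log (α*((n:ℝ)-(j:ℝ)))
      + α*(j:ℝ)*Real.log y + α*((n:ℝ)-(j:ℝ))*Real.log b
      - 5 - Real.log (α*(j:ℝ)) - Real.log (α*((n:ℝ)-(j:ℝ)))
    ≤ Real.log (gbinom (α * n) (α * j) * y ^ (α * (j:ℝ)) * b ^ (α * ((n:ℝ) - (j:ℝ)))) := by
  have ha0 : (0:ℝ) < α * (j:ℝ) := by linarith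
  have hc0 : (0:ℝ) < α * ((n:ℝ) - (j:ℝ)) := by linarith
  have hs0 : (0:ℝ) < α * (n:ℝ) := by nlinarith
  have hs2 : (2:ℝ) ≤ α * (n:ℝ) := by nlinarith
  have hga : 0 < Real.Gamma (α * (j:ℝ) + 1) := Real.Gamma_pos_of_pos (by linarith)
  have hgc : 0 < Real.Gamma (α * ((n:ℝ) - (j:ℝ)) + 1) := Real.Gamma_pos_of_pos (by linarith)
  have hgs : 0 < Real.Gamma (α * (n:ℝ) + 1) := Real.Gamma_pos_of_pos (by linarith)
  have hsub : α * (n:ℝ) - α * (j:ℝ) = α * ((n:ℝ) - (j:ℝ)) := by ring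
  have hgb : gbinom (α * n) (α * j) = Real.Gamma (α * (n:ℝ) + 1)
      / (Real.Gamma (α * (j:ℝ) + 1) * Real.Gamma (α * ((n:ℝ) - (j:ℝ)) + 1)) := by
    rw [gbinom, hsub]
  have hgbpos : 0 < gbinom (α * n) (α * j) := by rw [hgb]; positivity
  have hya : (0:ℝ) < y ^ (α * (j:ℝ)) := Real.rpow_pos_of_pos hy _
  have hbc : (0:ℝ) < b ^ (α * ((n:ℝ) - (j:ℝ))) := Real.rpow_pos_of_pos hb _
  have hR : Real.log (gbinom (α * n) (α * j) * y ^ (α * (j:ℝ)) * b ^ (α * ((n:ℝ) - (j:ℝ))))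
      = Real.log (Real.Gamma (α * (n:ℝ) + 1)) - Real.log (Real.Gamma (α * (j:ℝ) + 1))
        - Real.log (Real.Gamma (α * ((n:ℝ) - (j:ℝ)) + 1))
        + α*(j:ℝ)*Real.log y + α*((n:ℝ)-(j:ℝ))*Real.log b := by
    rw [Real.log_mul (mul_pos hgbpos hya).ne' hbc.ne', Real.log_mul hgbpos.ne' hya.ne',
      hgb, Real.log_div hgs.ne' (mul_pos hga hgc).ne', Real.log_mul hga.ne' hgc.ne',
      Real.log_rpow hy, Real.log_rpow hb]
    ring
  rw [hR]
  have h1 := log_gamma_lower hs0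
  have h2 := log_gamma_upper ha2
  have h3 := log_gamma_upper hc2
  have hacs : α*(j:ℝ) + α*((n:ℝ)-(j:ℝ)) = α*(n:ℝ) := by ring
  linarith

lemma term_pos {α y b : ℝ} (hα : 0 < α) (hy : 0 < y) (hb : 0 < b) {n j : ℕ} (hj : j ≤ n) :
    0 < gbinom (α * n) (α * j) * y ^ (α * (j:ℝ)) * b ^ (α * ((n:ℝ) - (j:ℝ))) := by
  have hjn : (j:ℝ) ≤ (n:ℝ) := Nat.cast_le.2 hj
  have h1 : 0 < Real.Gamma (α * (n:ℝ) + 1) := Real.Gamma_pos_of_pos (by positivity)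
  have h2 : 0 < Real.Gamma (α * (j:ℝ) + 1) := Real.Gamma_pos_of_pos (by positivity)
  have h3 : 0 < Real.Gamma (α * (n:ℝ) - α * (j:ℝ) + 1) := by
    apply Real.Gamma_pos_of_pos
    nlinarith
  have hgb : 0 < gbinom (α * n) (α * j) := by rw [gbinom]; positivity
  positivity

lemma Sfun_pos {α y b : ℝ} (hα : 0 < α) (hy : 0 < y) (hb : 0 < b) (n : ℕ) :
    0 < Sfun α y b n := by
  rw [Sfun]
  apply Finset.sum_pos
  · intro j hjmem
    exact term_pos hα hy hb (Nat.lt_succ_iff.1 (Finset.mem_range.1 hjmem))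
  · exact ⟨0, Finset.mem_range.2 (Nat.succ_pos n)⟩

lemma Sfun_log_upper {α y b : ℝ} (hα : 0 < α) (hy : 0 < y) (hb : 0 < b)
    {n : ℕ} (hs2 : 2 ≤ α * (n:ℝ)) :
    Real.log (Sfun α y b n) ≤ Real.log ((n:ℝ)+1) + 4 + Real.log (α*(n:ℝ))
      + α*(n:ℝ)*Real.log (y+b) := by
  have hyb : 0 < y + b := by linarith
  have hn0 : (0:ℝ) < α * n := by linarith
  have h1 : Sfun α y b n ≤ ((n:ℝ)+1) * (Real.exp 4 * (α * (n:ℝ)) * (y + b) ^ (α * (n:ℝ))) := by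
    rw [Sfun]
    have := Finset.sum_le_card_nsmul (Finset.range (n+1))
      (fun j => gbinom (α * n) (α * j) * y ^ (α * (j:ℝ)) * b ^ (α * ((n:ℝ) - (j:ℝ))))
      (Real.exp 4 * (α * (n:ℝ)) * (y + b) ^ (α * (n:ℝ)))
      (fun j hjmem => term_upper hα hy hb (Nat.lt_succ_iff.1 (Finset.mem_range.1 hjmem)) hs2)
    rw [Finset.card_range, nsmul_eq_mul] at this
    push_cast at this ⊢
    linarith
  have h2 := Real.log_le_log (Sfun_pos hα hy hb n) h1
  rw [Real.log_mul (by positivity) (by positivity), Real.log_mul (by positivity) (by positivity),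
    Real.log_mul (by positivity) (by positivity), Real.log_exp, Real.log_rpow hyb] at h2
  linarith

lemma Sfun_log_lower {α y b : ℝ} (hα : 0 < α) (hy : 0 < y) (hb : 0 < b)
    {n j : ℕ} (hj : j ≤ n) (ha2 : 2 ≤ α * (j:ℝ)) (hc2 : 2 ≤ α * ((n:ℝ) - (j:ℝ))) :
    α*(n:ℝ)*Real.log (α*(n:ℝ)) - α*(j:ℝ)*Real.log (α*(j:ℝ))
      - α*((n:ℝ)-(j:ℝ))*Real.log (α*((n:ℝ)-(j:ℝ)))
      + α*(j:ℝ)*Real.log y + α*((n:ℝ)-(j:ℝ))*Real.log b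
      - 5 - Real.log (α*(j:ℝ)) - Real.log (α*((n:ℝ)-(j:ℝ)))
    ≤ Real.log (Sfun α y b n) := by
  refine (term_log_lower hα hy hb hj ha2 hc2).trans ?_
  apply Real.log_le_log (term_pos hα hy hb hj)
  rw [Sfun]
  exact Finset.single_le_sum
    (fun i hi => (term_pos hα hy hb (Nat.lt_succ_iff.1 (Finset.mem_range.1 hi))).le)
    (Finset.mem_range.2 (Nat.lt_succ_iff.2 hj))


lemma log_div_nat_tendsto : Tendsto (fun n : ℕ => Real.log n / n) atTop (nhds 0) :=
  (Real.isLittleO_log_id_atTop.tendsto_div_nhds_zero).comp tendsto_natCast_atTop_atTop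

lemma log_mul_div_nat_tendsto {c : ℝ} (hc : 0 < c) :
    Tendsto (fun n : ℕ => Real.log (c * n) / n) atTop (nhds 0) := by
  have h1 : Tendsto (fun n : ℕ => Real.log c / n + Real.log n / n) atTop (nhds 0) := by
    have := (tendsto_const_div_atTop_nhds_zero_nat (Real.log c)).add log_div_nat_tendsto
    simpa using this
  apply h1.congr'
  filter_upwards [eventually_ge_atTop 1] with n hn
  have hn0 : (0:ℝ) < n := by exact_mod_cast hn
  rw [Real.log_mul (ne_of_gt hc) (ne_of_gt hn0)]
  ring

lemma log_add_one_div_nat_tendsto : Tendsto (fun n : ℕ => Real.log ((n:ℝ)+1) / n) atTop (nhds 0) := by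
  have key : Tendsto (fun n : ℕ => Real.log (2 * n) / n) atTop (nhds 0) :=
    log_mul_div_nat_tendsto (by norm_num)
  apply tendsto_of_tendsto_of_tendsto_of_le_of_le' tendsto_const_nhds key
  · filter_upwards [eventually_ge_atTop 1] with n hn
    have hn0 : (1:ℝ) ≤ n := by exact_mod_cast hn
    have : (0:ℝ) ≤ Real.log ((n:ℝ)+1) := Real.log_nonneg (by linarith)
    positivity
  · filter_upwards [eventually_ge_atTop 1] with n hn
    have hn0 : (1:ℝ) ≤ n := by exact_mod_cast hn
    apply div_le_div_of_nonneg_right ?_ (by linarith)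
    exact Real.log_le_log (by linarith) (by linarith)

lemma Sfun_tendsto {α y b : ℝ} (hα : 0 < α) (hy : 0 < y) (hb : 0 < b) :
    Tendsto (fun n : ℕ => Real.log (Sfun α y b n) / n) atTop
      (nhds (α * Real.log (y + b))) := by
  have hyb : 0 < y + b := by linarith
  set t : ℝ := y / (y + b) with ht_def
  have ht0 : 0 < t := by positivity
  have ht1 : t < 1 := by rw [ht_def, div_lt_one hyb]; linarith
  set J : ℕ → ℕ := fun n => ⌊t * n⌋₊ with hJ_def
  have hJle : ∀ n : ℕ, (J n : ℝ) ≤ t * n := fun n => Nat.floor_le (by positivity)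
  have hJge : ∀ n : ℕ, t * n - 1 ≤ (J n : ℝ) := fun n => (Nat.sub_one_lt_floor _).le
  have hJlen : ∀ n : ℕ, J n ≤ n := by
    intro n
    have h : (J n : ℝ) ≤ (n:ℝ) := (hJle n).trans (by nlinarith [(Nat.cast_nonneg n : (0:ℝ) ≤ (n:ℝ))])
    exact Nat.cast_le.mp h
  -- the sequences a n, c n with their divergence
  have haTop : Tendsto (fun n : ℕ => α * (J n : ℝ)) atTop atTop := by
    have h1 : Tendsto (fun n : ℕ => (α * t) * (n:ℝ) - α) atTop atTop :=
      Filter.tendsto_atTop_add_const_right _ _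
        (Tendsto.const_mul_atTop (by positivity) tendsto_natCast_atTop_atTop)
    refine tendsto_atTop_mono (fun n => ?_) h1
    nlinarith [hJge n]
  have hcTop : Tendsto (fun n : ℕ => α * ((n:ℝ) - (J n : ℝ))) atTop atTop := by
    have h1 : Tendsto (fun n : ℕ => (α * (1 - t)) * (n:ℝ)) atTop atTop :=
      Tendsto.const_mul_atTop (by nlinarith) tendsto_natCast_atTop_atTop
    refine tendsto_atTop_mono (fun n => ?_) h1
    nlinarith [hJle n]
  -- τ n → t
  have hτ : Tendsto (fun n : ℕ => (J n : ℝ) / n) atTop (nhds t) := by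
    apply tendsto_of_tendsto_of_tendsto_of_le_of_le'
      (g := fun n : ℕ => t - 1 / (n:ℝ)) (h := fun _ : ℕ => t)
    · simpa using tendsto_const_nhds.sub (tendsto_one_div_atTop_nhds_zero_nat (𝕜 := ℝ))
    · exact tendsto_const_nhds
    · filter_upwards [eventually_ge_atTop 1] with n hn
      have hn0 : (0:ℝ) < n := by exact_mod_cast hn
      rw [le_div_iff₀ hn0]
      have he : (1/(n:ℝ))*(n:ℝ) = 1 := by field_simp
      nlinarith [hJge n]
    · filter_upwards [eventually_ge_atTop 1] with n hn
      have hn0 : (0:ℝ) < n := by exact_mod_cast hn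
      rw [div_le_iff₀ hn0]
      exact hJle n
  -- limits of log(τ) and log(1-τ)
  have hτlog : Tendsto (fun n : ℕ => Real.log ((J n : ℝ)/n)) atTop (nhds (Real.log t)) :=
    (Real.continuousAt_log ht0.ne').tendsto.comp hτ
  have h1τ : Tendsto (fun n : ℕ => 1 - (J n : ℝ)/n) atTop (nhds (1 - t)) :=
    tendsto_const_nhds.sub hτ
  have h1τlog : Tendsto (fun n : ℕ => Real.log (1 - (J n : ℝ)/n)) atTop
      (nhds (Real.log (1-t))) :=
    (Real.continuousAt_log (by linarith : (1:ℝ)-t ≠ 0)).tendsto.comp h1τ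
  set G : ℕ → ℝ := fun n => -(((J n : ℝ)/n) * Real.log ((J n : ℝ)/n))
      - (1 - (J n : ℝ)/n) * Real.log (1 - (J n : ℝ)/n)
      + ((J n : ℝ)/n) * Real.log y + (1 - (J n : ℝ)/n) * Real.log b with hG_def
  have hGlim : Tendsto G atTop (nhds (Real.log (y+b))) := by
    have hval : -(t * Real.log t) - (1-t)*Real.log (1-t) + t*Real.log y + (1-t)*Real.log b
        = Real.log (y+b) := by
      have e1 : Real.log t = Real.log y - Real.log (y+b) := by
        rw [ht_def, Real.log_div (ne_of_gt hy) (ne_of_gt hyb)]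
      have e2 : (1:ℝ) - t = b/(y+b) := by rw [ht_def]; field_simp; ring
      have e3 : Real.log (1-t) = Real.log b - Real.log (y+b) := by
        rw [e2, Real.log_div (ne_of_gt hb) (ne_of_gt hyb)]
      rw [e1, e3]; ring
    rw [← hval]
    exact (((hτ.mul hτlog).neg.sub (h1τ.mul h1τlog)).add (hτ.mul_const _)).add
      (h1τ.mul_const _)
  -- penalty terms
  have hlogan : Tendsto (fun n : ℕ => Real.log (α*(n:ℝ))/n) atTop (nhds 0) :=
    log_mul_div_nat_tendsto hα
  have hloga : Tendsto (fun n : ℕ => Real.log (α*(J n:ℝ))/n) atTop (nhds 0) := by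
    apply tendsto_of_tendsto_of_tendsto_of_le_of_le' tendsto_const_nhds hlogan
    · filter_upwards [haTop.eventually_ge_atTop 1, eventually_ge_atTop 1] with n h1 h2
      have hn0 : (0:ℝ) < n := by exact_mod_cast h2
      have := Real.log_nonneg h1
      positivity
    · filter_upwards [haTop.eventually_ge_atTop 1, eventually_ge_atTop 1] with n h1 h2
      have hn0 : (0:ℝ) < n := by exact_mod_cast h2
      apply div_le_div_of_nonneg_right _ hn0.le
      apply Real.log_le_log (by linarith)
      have : (J n : ℝ) ≤ (n:ℝ) := Nat.cast_le.mpr (hJlen n)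
      nlinarith
  have hlogc : Tendsto (fun n : ℕ => Real.log (α*((n:ℝ)-(J n:ℝ)))/n) atTop (nhds 0) := by
    apply tendsto_of_tendsto_of_tendsto_of_le_of_le' tendsto_const_nhds hlogan
    · filter_upwards [hcTop.eventually_ge_atTop 1, eventually_ge_atTop 1] with n h1 h2
      have hn0 : (0:ℝ) < n := by exact_mod_cast h2
      have := Real.log_nonneg h1
      positivity
    · filter_upwards [hcTop.eventually_ge_atTop 1, eventually_ge_atTop 1] with n h1 h2
      have hn0 : (0:ℝ) < n := by exact_mod_cast h2
      apply div_le_div_of_nonneg_right _ hn0.le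
      apply Real.log_le_log (by linarith)
      have : (0:ℝ) ≤ (J n : ℝ) := Nat.cast_nonneg _
      nlinarith
  have hpen : Tendsto (fun n : ℕ => (5 + Real.log (α*(J n:ℝ))
      + Real.log (α*((n:ℝ)-(J n:ℝ))))/n) atTop (nhds 0) := by
    have h0 := ((tendsto_const_div_atTop_nhds_zero_nat 5).add hloga).add hlogc
    simp only [add_zero] at h0
    apply h0.congr (fun n => by rw [← add_div, ← add_div])
  -- the lower and upper sequences
  have hlower : Tendsto (fun n : ℕ => α * G n - (5 + Real.log (α*(J n:ℝ))
      + Real.log (α*((n:ℝ)-(J n:ℝ))))/n) atTop (nhds (α * Real.log (y+b))) := by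
    have := (hGlim.const_mul α).sub hpen
    simpa using this
  have hupper : Tendsto (fun n : ℕ => (Real.log ((n:ℝ)+1) + 4 + Real.log (α*(n:ℝ)))/n
      + α*Real.log (y+b)) atTop (nhds (α * Real.log (y+b))) := by
    have h0 : Tendsto (fun n : ℕ => (Real.log ((n:ℝ)+1) + 4 + Real.log (α*(n:ℝ)))/n)
        atTop (nhds 0) := by
      have := (log_add_one_div_nat_tendsto.add (tendsto_const_div_atTop_nhds_zero_nat 4)).add
        hlogan
      simp only [add_zero] at this
      apply this.congr (fun n => by rw [← add_div, ← add_div])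
    simpa using h0.add tendsto_const_nhds
  -- squeeze
  apply tendsto_of_tendsto_of_tendsto_of_le_of_le' hlower hupper
  · filter_upwards [haTop.eventually_ge_atTop 2, hcTop.eventually_ge_atTop 2,
      eventually_ge_atTop 1] with n ha2 hc2 hn1
    have hn0 : (0:ℝ) < n := by exact_mod_cast hn1
    have hkey := Sfun_log_lower hα hy hb (hJlen n) ha2 hc2
    have hJnn : (0:ℝ) ≤ (J n:ℝ) := Nat.cast_nonneg _
    have hJpos : (0:ℝ) < (J n:ℝ) := by nlinarith
    have hJltn : (J n:ℝ) < (n:ℝ) := by nlinarith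
    have hτpos : 0 < (J n:ℝ)/(n:ℝ) := by positivity
    have hτlt1 : (J n:ℝ)/(n:ℝ) < 1 := (div_lt_one hn0).2 hJltn
    have e_a : α*(J n:ℝ) = (α*(n:ℝ)) * ((J n:ℝ)/(n:ℝ)) := by
      field_simp
    have e_c : α*((n:ℝ)-(J n:ℝ)) = (α*(n:ℝ)) * (1 - (J n:ℝ)/(n:ℝ)) := by
      field_simp
    have la : Real.log (α*(J n:ℝ)) = Real.log (α*(n:ℝ)) + Real.log ((J n:ℝ)/(n:ℝ)) := by
      rw [e_a, Real.log_mul (by positivity) (ne_of_gt hτpos)]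
    have lc : Real.log (α*((n:ℝ)-(J n:ℝ)))
        = Real.log (α*(n:ℝ)) + Real.log (1-(J n:ℝ)/(n:ℝ)) := by
      rw [e_c, Real.log_mul (by positivity) (by linarith : (1:ℝ)-(J n:ℝ)/(n:ℝ) ≠ 0)]
    have hident : (n:ℝ) * (α * G n) - (5 + Real.log (α*(J n:ℝ))
          + Real.log (α*((n:ℝ)-(J n:ℝ))))
        = α*(n:ℝ)*Real.log (α*(n:ℝ)) - α*(J n:ℝ)*Real.log (α*(J n:ℝ))
          - α*((n:ℝ)-(J n:ℝ))*Real.log (α*((n:ℝ)-(J n:ℝ)))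
          + α*(J n:ℝ)*Real.log y + α*((n:ℝ)-(J n:ℝ))*Real.log b
          - 5 - Real.log (α*(J n:ℝ)) - Real.log (α*((n:ℝ)-(J n:ℝ))) := by
      simp only [hG_def]
      rw [la, lc, e_a, e_c]
      ring
    calc α * G n - (5 + Real.log (α*(J n:ℝ)) + Real.log (α*((n:ℝ)-(J n:ℝ))))/n
        = ((n:ℝ) * (α * G n) - (5 + Real.log (α*(J n:ℝ))
            + Real.log (α*((n:ℝ)-(J n:ℝ)))))/n := by
          field_simp
      _ ≤ Real.log (Sfun α y b n) / n := by
          rw [hident]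
          exact div_le_div_of_nonneg_right hkey hn0.le
  · filter_upwards [(Tendsto.const_mul_atTop hα tendsto_natCast_atTop_atTop).eventually_ge_atTop 2,
      eventually_ge_atTop 1] with n hs2 hn1
    have hn0 : (0:ℝ) < n := by exact_mod_cast hn1
    have h := Sfun_log_upper hα hy hb hs2
    calc Real.log (Sfun α y b n)/n
        ≤ (Real.log ((n:ℝ)+1) + 4 + Real.log (α*(n:ℝ)) + α*(n:ℝ)*Real.log (y+b))/n :=
          div_le_div_of_nonneg_right h hn0.le
      _ = (Real.log ((n:ℝ)+1) + 4 + Real.log (α*(n:ℝ)))/n + α*Real.log (y+b) := by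
          field_simp


/-- Limit of the scaled logarithmic moment generating function of `S_{α,x}^{(n)}/n`:
`(1/n) log E[e^{ξ S}] → α log(1 − x + x e^{ξ/α})`. -/
theorem fracBinom_lmgf_limit (α x : ℝ) (hα : 0 < α) (hx : x ∈ Set.Ioo (0 : ℝ) 1) (ξ : ℝ) :
    Filter.Tendsto (fun n : ℕ =>
        Real.log (∑ j ∈ Finset.range (n + 1), Real.exp (ξ * j) * fracW α x n j) / (n : ℝ))
      Filter.atTop (nhds (α * Real.log (1 - x + x * Real.exp (ξ / α)))) := by
  obtain ⟨hx0, hx1⟩ := hx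
  set y : ℝ := x * Real.exp (ξ / α) with hy_def
  have hy : 0 < y := by positivity
  have hb : 0 < 1 - x := by linarith
  have hsum : ∀ n : ℕ, (∑ j ∈ Finset.range (n + 1), Real.exp (ξ * j) * fracW α x n j)
      = Sfun α y (1-x) n / Sfun α x (1-x) n := by
    intro n
    have hZ : fracZ α x n = α * Sfun α x (1-x) n := rfl
    have hSx : 0 < Sfun α x (1-x) n := Sfun_pos hα hx0 hb n
    rw [Sfun, Finset.sum_div]
    apply Finset.sum_congr rfl
    intro j _
    have hy_pow : y ^ (α*(j:ℝ)) = x ^ (α*(j:ℝ)) * Real.exp (ξ*(j:ℝ)) := by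
      rw [hy_def, Real.mul_rpow hx0.le (Real.exp_pos _).le, ← Real.exp_mul]
      congr 2
      field_simp
    rw [fracW, hZ, hy_pow]
    field_simp
  have T1 := Sfun_tendsto hα hy hb
  have T2 := Sfun_tendsto hα hx0 hb
  have Tdiff := T1.sub T2
  have hval : α * Real.log (y + (1-x)) - α * Real.log (x + (1-x))
      = α * Real.log (1 - x + x * Real.exp (ξ / α)) := by
    rw [show x + (1-x) = (1:ℝ) by ring, Real.log_one,
      show y + (1-x) = 1 - x + x * Real.exp (ξ / α) by rw [hy_def]; ring]
    ring
  rw [hval] at Tdiff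
  apply Tdiff.congr
  intro n
  rw [hsum n, Real.log_div (Sfun_pos hα hy hb n).ne' (Sfun_pos hα hx0 hb n).ne', sub_div]
end
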